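/- arXiv:2509.24309 — 7 statements merged into one kernel-verified Lean document; each statement's English description precedes it below -/
import Mathlib

section
/- Let M be a matroid with weight function w : E → ℝ. If B₁ and B₂ are both minimum-weight bases of M, then for every real number c, the sets {e ∈ B₁ : w(e) = c} and {e ∈ B₂ : w(e) = c} have the same cardinality. -/
open Matroid Set

variable {α : Type*}

/-- The total weight of a set of elements. -/
noncomputable def wt (w : α → ℝ) (B : Set α) : ℝ := ∑ᶠ e ∈ B, w e

/-- `B` is a minimum-weight basis of `(M, w)`. -/
def MinWeightBase (M : Matroid α) (w : α → ℝ) (B : Set α) : Prop :=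
  M.IsBase B ∧ ∀ B', M.IsBase B' → wt w B ≤ wt w B'

/-- A circuit of a matroid: a minimal dependent set. -/
def IsCircuit (M : Matroid α) (C : Set α) : Prop :=
  C ⊆ M.E ∧ ¬ M.Indep C ∧ ∀ D ⊂ C, M.Indep D

lemma wt_insert (w : α → ℝ) {B : Set α} (hB : B.Finite) {f : α} (hf : f ∉ B) :
    wt w (insert f B) = w f + wt w B := finsum_mem_insert w hf hB

lemma wt_remove (w : α → ℝ) {B : Set α} (hB : B.Finite) {g : α} (hg : g ∈ B) :
    wt w (B \ {g}) = wt w B - w g := by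
  have h1 : wt w (insert g (B \ {g})) = w g + wt w (B \ {g}) :=
    wt_insert w hB.diff (by simp)
  rw [Set.insert_diff_singleton, Set.insert_eq_self.2 hg] at h1
  linarith

lemma key [Fintype α] (M : Matroid α) (w : α → ℝ) (B₁ B₂ : Set α)
    (h₁ : MinWeightBase M w B₁) (h₂ : M.IsBase B₂) (P : α → Prop)
    (hP : ∀ x y, w x ≤ w y → P y → P x) :
    {e ∈ B₂ | P e}.ncard ≤ {e ∈ B₁ | P e}.ncard := by
  by_contra hlt
  push_neg at hlt
  set I₁ := {e ∈ B₁ | P e} with hI₁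
  set I₂ := {e ∈ B₂ | P e} with hI₂
  have hI₁B : I₁ ⊆ B₁ := fun x hx => hx.1
  have hind₁ : M.Indep I₁ := h₁.1.indep.subset hI₁B
  have hind₂ : M.Indep I₂ := h₂.indep.subset fun x hx => hx.1
  have hcard : I₁.encard < I₂.encard := by
    rwa [← (Set.toFinite I₁).cast_ncard_eq, ← (Set.toFinite I₂).cast_ncard_eq, Nat.cast_lt]
  obtain ⟨f, hfmem, hfind⟩ := hind₁.augment hind₂ hcard
  have hPf : P f := hfmem.1.2
  have hfB₁ : f ∉ B₁ := fun h => hfmem.2 ⟨h, hPf⟩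
  obtain ⟨B', hB', hsub, hsub'⟩ := Matroid.Indep.exists_isBase_subset_union_isBase hfind h₁.1
  have hB'sub : B' ⊆ insert f B₁ := by
    refine hsub'.trans ?_
    rintro x (hx | hx)
    · rcases hx with hx | hx
      · exact hx ▸ mem_insert f B₁
      · exact mem_insert_of_mem _ (hI₁B hx)
    · exact mem_insert_of_mem _ hx
  have hfB' : f ∈ B' := hsub (mem_insert f I₁)
  -- find g ∈ (insert f B₁) \ B'
  have hne : B' ≠ insert f B₁ := by
    intro h
    have := h₁.1.encard_eq_encard_of_isBase hB'
    rw [h, Set.encard_insert_of_notMem hfB₁,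
      Set.Finite.encard_eq_coe_toFinset_card B₁.toFinite, ← Nat.cast_one, ← Nat.cast_add,
      Nat.cast_inj] at this
    omega
  obtain ⟨g, hg, hgB'⟩ := exists_of_ssubset (hB'sub.ssubset_of_ne hne)
  have hgf : g ≠ f := fun h => hgB' (h ▸ hfB')
  have hgB₁ : g ∈ B₁ := hg.resolve_left hgf
  -- B' ⊆ insert f B₁ \ {g}, and both are bases... compare weights
  have hB'sub2 : B' ⊆ insert f B₁ \ {g} := fun x hx =>
    ⟨hB'sub hx, fun h => hgB' (mem_singleton_iff.1 h ▸ hx)⟩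
  have hbig : M.IsBase (insert f B₁ \ {g}) → False := by
    intro hbase
    -- weight comparison
    have hw : wt w (insert f B₁ \ {g}) = wt w B₁ + w f - w g := by
      rw [wt_remove w ((B₁.toFinite).insert f) (mem_insert_of_mem _ hgB₁),
        wt_insert w B₁.toFinite hfB₁]
      ring
    have hle := h₁.2 _ hbase
    rw [hw] at hle
    have hwg : w g ≤ w f := by linarith
    have hPg : P g := hP g f hwg hPf
    have : g ∈ I₁ := ⟨hgB₁, hPg⟩
    exact hgB' (hsub (mem_insert_of_mem _ this))
  apply hbig
  have hcc : (insert f B₁ \ {g}).encard = B'.encard := by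
    rw [Set.encard_diff_singleton_of_mem (mem_insert_of_mem _ hgB₁),
      Set.encard_insert_of_notMem hfB₁, h₁.1.encard_eq_encard_of_isBase hB']
    rw [Set.Finite.encard_eq_coe_toFinset_card B'.toFinite]
    exact_mod_cast rfl
  have heq : B' = insert f B₁ \ {g} :=
    Set.Finite.eq_of_subset_of_encard_le (Set.toFinite _) hB'sub2 hcc.le
  exact heq ▸ hB'

/-- Any two minimum-weight bases of a matroid contain, for every real
number `c`, the same number of elements of weight `c`. -/
theorem stmt2 [Fintype α] (M : Matroid α) (w : α → ℝ) (B₁ B₂ : Set α)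
    (h₁ : MinWeightBase M w B₁) (h₂ : MinWeightBase M w B₂) (c : ℝ) :
    {e ∈ B₁ | w e = c}.ncard = {e ∈ B₂ | w e = c}.ncard := by
  have key2 : ∀ P : α → Prop, (∀ x y, w x ≤ w y → P y → P x) →
      {e ∈ B₁ | P e}.ncard = {e ∈ B₂ | P e}.ncard :=
    fun P hP => le_antisymm (key M w B₂ B₁ h₂ h₁.1 P hP) (key M w B₁ B₂ h₁ h₂.1 P hP)
  have hle := key2 (fun e => w e ≤ c) (fun x y hxy h => hxy.trans h)
  have hlt := key2 (fun e => w e < c) (fun x y hxy h => lt_of_le_of_lt hxy h)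
  have hset : ∀ B : Set α, {e ∈ B | w e = c} = {e ∈ B | w e ≤ c} \ {e ∈ B | w e < c} := by
    intro B; ext x
    simp only [Set.mem_setOf_eq, Set.mem_diff, not_and, not_lt]
    constructor
    · rintro ⟨hx, rfl⟩; exact ⟨⟨hx, le_rfl⟩, fun _ => le_rfl⟩
    · rintro ⟨⟨hx, h1⟩, h2⟩; exact ⟨hx, le_antisymm h1 (h2 hx)⟩
  have hsub : ∀ B : Set α, {e ∈ B | w e < c} ⊆ {e ∈ B | w e ≤ c} :=
    fun B x hx => ⟨hx.1, hx.2.le⟩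
  rw [hset B₁, hset B₂, Set.ncard_diff (hsub B₁) (Set.toFinite _),
    Set.ncard_diff (hsub B₂) (Set.toFinite _), hle, hlt]
end

section
/- Let G be a directed acyclic graph with vertices s, v, and let P be a path from s to v. Let S ⊆ E(P) with edges e₁ = (t₁,s₁), …, e_k = (t_k,s_k) appearing in this order on P, and set s₀ = s, t_{k+1} = v. Then P is the unique s-v path containing all edges of S if and only if for each 0 ≤ i ≤ k, there is exactly one path from s_i to t_{i+1} in G. -/
variable {V : Type*}

/-- `l` is the vertex list of a directed simple path from `u` to `v` using edges in `E`. -/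
def IsPathOn (E : Set (V × V)) (u v : V) (l : List V) : Prop :=
  l ≠ [] ∧ l.Chain' (fun a b => (a, b) ∈ E) ∧ l.Nodup ∧ l.head? = some u ∧ l.getLast? = some v

/-- The list of edges of a path, in order. -/
def pathEdges (l : List V) : List (V × V) := l.zip l.tail

/-- A directed graph (given by its edge set) is acyclic. -/
def Acyclic (E : Set (V × V)) : Prop :=
  ∀ x : V, ¬ Relation.TransGen (fun a b => (a, b) ∈ E) x x

/-- There is exactly one directed path from `u` to `v` (`u ↝! v`). -/
def UniquePath (E : Set (V × V)) (u v : V) : Prop :=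
  ∃! l : List V, IsPathOn E u v l

lemma getLast?_mem' {l : List V} {a : V} (h : l.getLast? = some a) : a ∈ l := by
  obtain ⟨h1, h2⟩ := List.mem_getLast?_eq_getLast (x := a) (l := l) h
  rw [h2]; exact List.getLast_mem h1

lemma reach_head {r : V → V → Prop} : ∀ {l : List V} {h x : V},
    l.Chain' r → l.head? = some h → x ∈ l → Relation.ReflTransGen r h x := by
  intro l
  induction l with
  | nil => intro h x _ _ hx; simp at hx
  | cons a t ih =>
    intro h x hc hh hx
    simp only [List.head?_cons, Option.some.injEq] at hh; subst hh
    rcases List.mem_cons.1 hx with rfl | hx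
    · exact .refl
    · cases t with
      | nil => simp at hx
      | cons b t' =>
        have hcc := List.isChain_cons_cons.1 hc
        exact Relation.ReflTransGen.head hcc.1 (ih hcc.2 rfl hx)

lemma reach_last {r : V → V → Prop} : ∀ {l : List V} {w x : V},
    l.Chain' r → l.getLast? = some w → x ∈ l → Relation.ReflTransGen r x w := by
  intro l
  induction l with
  | nil => intro w x _ _ hx; simp at hx
  | cons a t ih =>
    intro w x hc hw hx
    cases t with
    | nil =>
      simp only [List.getLast?_singleton, Option.some.injEq] at hw
      simp only [List.mem_singleton] at hx
      subst hw; subst hx; exact .refl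
    | cons b t' =>
      have hcc := List.isChain_cons_cons.1 hc
      rw [List.getLast?_cons_cons] at hw
      rcases List.mem_cons.1 hx with rfl | hx
      · exact Relation.ReflTransGen.head hcc.1 (ih hcc.2 hw (List.mem_cons_self))
      · exact ih hcc.2 hw hx

lemma split_of_mem_pathEdges : ∀ {l : List V} {a b : V}, (a, b) ∈ pathEdges l →
    ∃ A B, l = A ++ B ∧ A.getLast? = some a ∧ B.head? = some b := by
  intro l
  induction l with
  | nil => intro a b h; simp [pathEdges] at h
  | cons x t ih =>
    intro a b h
    cases t with
    | nil => simp [pathEdges] at h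
    | cons y t' =>
      have heq : pathEdges (x :: y :: t') = (x, y) :: pathEdges (y :: t') := rfl
      rw [heq, List.mem_cons] at h
      rcases h with h | h
      · obtain ⟨rfl, rfl⟩ := Prod.mk.injEq .. ▸ h
        exact ⟨[a], b :: t', rfl, rfl, rfl⟩
      · obtain ⟨A, B, hAB, hA, hB⟩ := ih h
        cases A with
        | nil => simp at hA
        | cons c A' =>
          exact ⟨x :: c :: A', B, by rw [List.cons_append, ← hAB],
            by rw [List.getLast?_cons_cons]; exact hA, hB⟩

lemma pathEdges_append : ∀ {A : List V} (B : List V) {a b : V}, A.getLast? = some a →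
    B.head? = some b → pathEdges (A ++ B) = pathEdges A ++ (a, b) :: pathEdges B := by
  intro A
  induction A with
  | nil => intro B a b hA; simp at hA
  | cons x A' ih =>
    intro B a b hA hB
    cases A' with
    | nil =>
      simp only [List.getLast?_singleton, Option.some.injEq] at hA; subst hA
      cases B with
      | nil => simp at hB
      | cons y B' =>
        simp only [List.head?_cons, Option.some.injEq] at hB; subst hB
        rfl
    | cons y A'' =>
      rw [List.getLast?_cons_cons] at hA
      have h1 : pathEdges ((x :: y :: A'') ++ B) = (x, y) :: pathEdges ((y :: A'') ++ B) := rfl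
      have h2 : pathEdges (x :: y :: A'') = (x, y) :: pathEdges (y :: A'') := rfl
      rw [h1, h2, ih B hA hB, List.cons_append]

lemma isPathOn_comp {E : Set (V × V)} {s a b v : V} {A B : List V}
    (h1 : IsPathOn E s a A) (h2 : IsPathOn E b v B) (hE : (a, b) ∈ E)
    (hd : ∀ x ∈ A, x ∉ B) : IsPathOn E s v (A ++ B) := by
  obtain ⟨hA0, hAc, hAn, hAh, hAl⟩ := h1
  obtain ⟨hB0, hBc, hBn, hBh, hBl⟩ := h2
  refine ⟨by simp [hA0], ?_, ?_, ?_, ?_⟩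
  · unfold List.Chain'; rw [List.isChain_append]
    refine ⟨hAc, hBc, fun x hx y hy => ?_⟩
    rw [hAl, Option.mem_some_iff] at hx
    rw [hBh, Option.mem_some_iff] at hy
    subst hx; subst hy; exact hE
  · exact List.nodup_append.2 ⟨hAn, hBn, fun x hx y hy hxy => hd x hx (hxy ▸ hy)⟩
  · rw [List.head?_append, hAh]; rfl
  · rw [List.getLast?_append_of_ne_nil _ hB0]; exact hBl

lemma isPathOn_decomp {E : Set (V × V)} {s v a b : V} {A B : List V}
    (h : IsPathOn E s v (A ++ B)) (hA : A.getLast? = some a) (hB : B.head? = some b) :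
    IsPathOn E s a A ∧ IsPathOn E b v B ∧ (a, b) ∈ E ∧ ∀ x ∈ A, x ∉ B := by
  obtain ⟨_, hc, hn, hh, hl⟩ := h
  have hA0 : A ≠ [] := fun h => by simp [h] at hA
  have hB0 : B ≠ [] := fun h => by simp [h] at hB
  unfold List.Chain' at hc; rw [List.isChain_append] at hc
  rw [List.nodup_append] at hn
  rw [List.head?_append] at hh
  rw [List.getLast?_append_of_ne_nil _ hB0] at hl
  have hAh : A.head? = some s := by
    cases A with
    | nil => exact absurd rfl hA0
    | cons c A' => simpa using hh
  exact ⟨⟨hA0, hc.1, hn.1, hAh, hA⟩, ⟨hB0, hc.2.1, hn.2.1, hB, hl⟩,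
    hc.2.2 a (by rw [hA]; rfl) b (by rw [hB]; rfl), fun x hx hxB => hn.2.2 x hx x hxB rfl⟩

lemma disjoint_of_acyclic {E : Set (V × V)} (hacyc : Acyclic E) {s a b v : V} {A B : List V}
    (h1 : IsPathOn E s a A) (h2 : IsPathOn E b v B) (hE : (a, b) ∈ E) :
    ∀ x ∈ A, x ∉ B := by
  intro x hxA hxB
  have r1 : Relation.ReflTransGen (fun a b => (a, b) ∈ E) x a := reach_last h1.2.1 h1.2.2.2.2 hxA
  have r2 : Relation.ReflTransGen (fun a b => (a, b) ∈ E) b x := reach_head h2.2.1 h2.2.2.2.1 hxB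
  exact hacyc x ((Relation.TransGen.tail' r1 hE).trans_left r2)

lemma sublist_peel {α : Type*} {e : α} {es : List α} : ∀ {X Y : List α},
    List.Sublist (e :: es) (X ++ e :: Y) → e ∉ X → List.Sublist es Y := by
  intro X
  induction X with
  | nil =>
    intro Y h _
    cases h with
    | cons _ h => exact (List.sublist_cons_self e es).trans h
    | cons_cons _ h => exact h
  | cons x X' ih =>
    intro Y h hX
    rw [List.cons_append] at h
    cases h with
    | cons _ h => exact ih h (fun hc => hX (List.mem_cons_of_mem _ hc))
    | cons_cons _ h => exact absurd (List.mem_cons_self) hX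

/-- Let `l` be a path from `s` to `v` in a DAG, and `es = [e₁, …, e_k]`
the edges of `S ⊆ E(P)` in the order in which they appear on `P` (a sublist of the edge
list of `l`). Writing `e_i = (t_i, s_i)`, `s₀ = s`, `t_{k+1} = v`, the path `l` is the
unique `s`-`v` path containing all edges of `S` iff `s_i ↝! t_{i+1}` for all `0 ≤ i ≤ k`. -/
theorem stmt8 (E : Set (V × V)) (hacyc : Acyclic E) (s v : V) (l : List V)
    (hP : IsPathOn E s v l) (es : List (V × V)) (hsub : es.Sublist (pathEdges l)) :
    (∀ l', IsPathOn E s v l' → (∀ e ∈ es, e ∈ pathEdges l') → l' = l) ↔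
      ∀ p ∈ (s :: es.map Prod.snd).zip (es.map Prod.fst ++ [v]), UniquePath E p.1 p.2 := by
  induction es generalizing s l with
  | nil =>
    constructor
    · intro h p hp
      have hpe : p = (s, v) := by simpa using hp
      subst hpe
      exact ⟨l, hP, fun y hy => h y hy (by simp)⟩
    · intro h l' hl' _
      obtain ⟨w, hw, huniq⟩ := h (s, v) (by simp)
      rw [huniq l' hl', huniq l hP]
  | cons e es ih =>
    obtain ⟨t₁, s₁⟩ := e
    have hmem : (t₁, s₁) ∈ pathEdges l := hsub.subset (List.mem_cons_self)
    obtain ⟨P₁, P₂, rfl, hA, hB⟩ := split_of_mem_pathEdges hmem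
    obtain ⟨hP1, hP2, hE, hdisj⟩ := isPathOn_decomp hP hA hB
    have hedges : pathEdges (P₁ ++ P₂) = pathEdges P₁ ++ (t₁, s₁) :: pathEdges P₂ :=
      pathEdges_append P₂ hA hB
    have hnotin : (t₁, s₁) ∉ pathEdges P₁ := by
      intro hc
      have hs1 : s₁ ∈ P₁ :=
        List.mem_of_mem_tail (List.of_mem_zip (show (t₁, s₁) ∈ P₁.zip P₁.tail from hc)).2
      have hs2 : s₁ ∈ P₂ := List.mem_of_mem_head? (by rw [hB]; rfl)
      exact hdisj s₁ hs1 hs2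
    have hsub' : List.Sublist es (pathEdges P₂) := by
      rw [hedges] at hsub
      exact sublist_peel hsub hnotin
    have IH := ih s₁ P₂ hP2 hsub'
    have hzip : (s :: ((t₁, s₁) :: es).map Prod.snd).zip
          (((t₁, s₁) :: es).map Prod.fst ++ [v])
        = (s, t₁) :: (s₁ :: es.map Prod.snd).zip (es.map Prod.fst ++ [v]) := by
      simp
    rw [hzip, List.forall_mem_cons, ← IH]
    constructor
    · intro h
      constructor
      · refine ⟨P₁, hP1, fun r hr => ?_⟩
        have hd := disjoint_of_acyclic hacyc hr hP2 hE
        have hpath := isPathOn_comp hr hP2 hE hd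
        have hre : pathEdges (r ++ P₂) = pathEdges r ++ (t₁, s₁) :: pathEdges P₂ :=
          pathEdges_append P₂ hr.2.2.2.2 hB
        have heq := h (r ++ P₂) hpath ?_
        · exact List.append_cancel_right heq
        · intro e he
          rw [hre]
          rcases List.mem_cons.1 he with rfl | he
          · exact List.mem_append_right _ (List.mem_cons_self)
          · exact List.mem_append_right _ (List.mem_cons_of_mem _ (hsub'.subset he))
      · intro q hq hqe
        have hd := disjoint_of_acyclic hacyc hP1 hq hE
        have hpath := isPathOn_comp hP1 hq hE hd
        have hre : pathEdges (P₁ ++ q) = pathEdges P₁ ++ (t₁, s₁) :: pathEdges q :=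
          pathEdges_append q hA hq.2.2.2.1
        have heq := h (P₁ ++ q) hpath ?_
        · exact List.append_cancel_left heq
        · intro e he
          rw [hre]
          rcases List.mem_cons.1 he with rfl | he
          · exact List.mem_append_right _ (List.mem_cons_self)
          · exact List.mem_append_right _ (List.mem_cons_of_mem _ (hqe e he))
    · rintro ⟨hu, hinner⟩ l' hl' hce
      have hmem' : (t₁, s₁) ∈ pathEdges l' := hce _ (List.mem_cons_self)
      obtain ⟨Q₁, Q₂, rfl, hQA, hQB⟩ := split_of_mem_pathEdges hmem'
      obtain ⟨hQ1, hQ2, _, _⟩ := isPathOn_decomp hl' hQA hQB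
      have hedgesQ : pathEdges (Q₁ ++ Q₂) = pathEdges Q₁ ++ (t₁, s₁) :: pathEdges Q₂ :=
        pathEdges_append Q₂ hQA hQB
      have hclaim : ∀ e ∈ es, e ∈ pathEdges Q₂ := by
        rintro ⟨x, y⟩ he
        have hmP2 : (x, y) ∈ pathEdges P₂ := hsub'.subset he
        have hml' := hce (x, y) (List.mem_cons_of_mem _ he)
        rw [hedgesQ] at hml'
        rcases List.mem_append.1 hml' with hQ | hQ
        · exfalso
          have hx2 : x ∈ P₂ :=
            (List.of_mem_zip (show (x, y) ∈ P₂.zip P₂.tail from hmP2)).1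
          have hxQ : x ∈ Q₁ :=
            (List.of_mem_zip (show (x, y) ∈ Q₁.zip Q₁.tail from hQ)).1
          have r1 : Relation.ReflTransGen (fun a b => (a, b) ∈ E) s₁ x :=
            reach_head hP2.2.1 hP2.2.2.2.1 hx2
          have r2 : Relation.ReflTransGen (fun a b => (a, b) ∈ E) x t₁ :=
            reach_last hQ1.2.1 hQ1.2.2.2.2 hxQ
          exact hacyc x ((Relation.TransGen.tail' r2 hE).trans_left r1)
        · rcases List.mem_cons.1 hQ with heq2 | hQ
          · exfalso
            have hmP2' : (t₁, s₁) ∈ pathEdges P₂ := heq2 ▸ hmP2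
            have ht2 : t₁ ∈ P₂ :=
              (List.of_mem_zip (show (t₁, s₁) ∈ P₂.zip P₂.tail from hmP2')).1
            exact hdisj t₁ (getLast?_mem' hA) ht2
          · exact hQ
      have e1 : Q₁ = P₁ := by
        obtain ⟨w, hw, huq⟩ := hu
        rw [huq Q₁ hQ1, huq P₁ hP1]
      have e2 : Q₂ = P₂ := hinner Q₂ hQ2 hclaim
      rw [e1, e2]
end

section
/- Let G be a directed acyclic graph whose s-t paths coincide with the shortest s-t paths, let P be an s-t path in G, and let H = G − E(P). Then a set S ⊆ E(G) is an anti-forcing set for P (i.e., P is the unique s-t path in G − S and S ∩ E(P) = ∅) if and only if S ∩ E(P) = ∅ and S is a multiway cut for the terminal set V(P) in H, i.e., for every pair of distinct vertices u, v ∈ V(P) there is no directed path from u to v in H − S. -/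
variable {V : Type*}

private lemma mem_pathEdges_iff {l : List V} {a b : V} :
    (a, b) ∈ pathEdges l ↔ ∃ i, ∃ _ : i + 1 < l.length, l[i] = a ∧ l[i+1] = b := by
  unfold pathEdges
  rw [List.mem_iff_getElem]
  constructor
  · rintro ⟨n, h, hn⟩
    have h1 : n + 1 < l.length := by
      simp only [List.length_zip, List.length_tail, lt_min_iff] at h; omega
    refine ⟨n, h1, ?_⟩
    rw [List.getElem_zip, List.getElem_tail] at hn
    exact ⟨congrArg Prod.fst hn, congrArg Prod.snd hn⟩
  · rintro ⟨i, h, h1, h2⟩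
    refine ⟨i, by simp only [List.length_zip, List.length_tail, lt_min_iff]; omega, ?_⟩
    rw [List.getElem_zip, List.getElem_tail, h1, h2]

private lemma mem_of_mem_pathEdges {l : List V} {a b : V} (h : (a, b) ∈ pathEdges l) :
    a ∈ l ∧ b ∈ l := by
  obtain ⟨i, hi, h1, h2⟩ := mem_pathEdges_iff.mp h
  exact ⟨h1 ▸ List.getElem_mem _, h2 ▸ List.getElem_mem _⟩

private lemma chain'_reflTransGen {r : V → V → Prop} {l : List V} (hc : l.Chain' r) :
    ∀ j (hj : j < l.length) i (hij : i ≤ j),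
      Relation.ReflTransGen r (l[i]'(lt_of_le_of_lt hij hj)) l[j] := by
  intro j
  induction j with
  | zero =>
    intro hj i hij
    obtain rfl : i = 0 := by omega
    exact .refl
  | succ n ih =>
    intro hj i hij
    rcases eq_or_lt_of_le hij with rfl | hlt
    · exact .refl
    · have hstep := List.isChain_iff_getElem.mp hc n (by omega)
      exact (ih (by omega) i (by omega)).tail hstep

private lemma eq_of_chain'_pathEdges {l l' : List V} (hnd : l.Nodup) (hne : l ≠ [])
    (h0 : l' ≠ []) (hc : l'.Chain' (fun a b => (a, b) ∈ pathEdges l))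
    (hh : l'.head? = l.head?) (hl : l'.getLast? = l.getLast?) : l' = l := by
  have hlpos : 0 < l.length := List.length_pos_iff.mpr hne
  have hlpos' : 0 < l'.length := List.length_pos_iff.mpr h0
  have key : ∀ n (h : n < l'.length), ∃ h2 : n < l.length, l'[n] = l[n] := by
    intro n
    induction n with
    | zero =>
      intro h
      refine ⟨hlpos, ?_⟩
      rw [List.head?_eq_getElem?, List.head?_eq_getElem?,
        List.getElem?_eq_getElem h, List.getElem?_eq_getElem hlpos] at hh
      exact Option.some_injective _ hh
    | succ n ih =>
      intro h
      obtain ⟨hn2, heq⟩ := ih (by omega)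
      have hstep := List.isChain_iff_getElem.mp hc n (by omega)
      obtain ⟨k, hk, hk1, hk2⟩ := mem_pathEdges_iff.mp hstep
      have : k = n := by
        rw [heq] at hk1
        exact (hnd.getElem_inj_iff.mp hk1).symm ▸ rfl
      subst this
      exact ⟨hk, hk2.symm⟩
  have hlast : l'.length = l.length := by
    obtain ⟨h2, heq⟩ := key (l'.length - 1) (by omega)
    rw [List.getLast?_eq_getElem?, List.getLast?_eq_getElem?,
      List.getElem?_eq_getElem (by omega : l'.length - 1 < l'.length),
      List.getElem?_eq_getElem (by omega : l.length - 1 < l.length)] at hl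
    have := Option.some_injective _ hl
    rw [heq] at this
    have := hnd.getElem_inj_iff.mp this
    omega
  exact List.ext_getElem hlast (fun n h1 h2 => (key n h1).2)

private lemma head?_some {l : List V} {u : V} (h : l.head? = some u) :
    ∃ hp : 0 < l.length, l[0] = u := by
  rw [List.head?_eq_getElem?, List.getElem?_eq_some_iff] at h
  exact h

private lemma getLast?_some {l : List V} {u : V} (h : l.getLast? = some u) :
    ∃ hp : 0 < l.length, l[l.length - 1] = u := by
  rw [List.getLast?_eq_getElem?, List.getElem?_eq_some_iff] at h
  obtain ⟨h1, h2⟩ := h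
  exact ⟨by omega, h2⟩

private lemma backward_dir (E : Set (V × V)) (s t : V) (l : List V) (hP : IsPathOn E s t l)
    (S : Set (V × V))
    (h2 : ∀ u ∈ l, ∀ v ∈ l, u ≠ v →
      ¬ ∃ q : List V, IsPathOn ((E \ {e | e ∈ pathEdges l}) \ S) u v q) :
    ∀ l' : List V, IsPathOn (E \ S) s t l' → l' = l := by
  classical
  obtain ⟨hlne, hlchain, hlnd, hlh, hll⟩ := hP
  rintro l' ⟨hne, hchain, hnd, hh, hl⟩
  obtain ⟨hLpos, hs0⟩ := head?_some hh
  obtain ⟨hlpos, hsl0⟩ := head?_some hlh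
  obtain ⟨_, htl⟩ := getLast?_some hll
  obtain ⟨_, ht'⟩ := getLast?_some hl
  by_cases hall : ∀ n (h : n + 1 < l'.length), (l'[n], l'[n+1]) ∈ pathEdges l
  · exact eq_of_chain'_pathEdges hlnd hlne hne
      (List.isChain_iff_getElem.mpr (fun i h => by simpa using hall i (by omega)))
      (by rw [hh, hlh]) (by rw [hl, hll])
  push_neg at hall
  obtain ⟨c, hc, hce⟩ := hall
  have hsmem : s ∈ l := hsl0 ▸ List.getElem_mem hlpos
  have htmem : t ∈ l := htl ▸ List.getElem_mem (by omega)
  -- a : greatest index ≤ c with l'[a] ∈ l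
  set P : ℕ → Prop := fun n => ∃ x ∈ l, l'[n]? = some x with hPdef
  have hP0 : P 0 := ⟨s, hsmem, by rw [List.getElem?_eq_getElem hLpos, hs0]⟩
  set a := Nat.findGreatest P c with hadef
  have ha : P a := Nat.findGreatest_spec (Nat.zero_le c) hP0
  have ha_le : a ≤ c := Nat.findGreatest_le c
  obtain ⟨x, hxl, hx⟩ := ha
  rw [List.getElem?_eq_some_iff] at hx
  obtain ⟨haL, hxa⟩ := hx
  -- b : least index ≥ c+1 with l'[b] ∈ l
  set Q : ℕ → Prop := fun n => ∃ x ∈ l, l'[c+1+n]? = some x with hQdef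
  have hexQ : ∃ n, Q n := by
    refine ⟨l'.length - 1 - (c+1), t, htmem, ?_⟩
    have he : c+1+(l'.length - 1 - (c+1)) = l'.length - 1 := by omega
    rw [he, List.getElem?_eq_getElem (by omega), ht']
  set d := Nat.find hexQ with hddef
  set b := c + 1 + d with hbdef
  obtain ⟨y, hyl, hy⟩ := Nat.find_spec hexQ
  rw [List.getElem?_eq_some_iff] at hy
  obtain ⟨hbL, hyb⟩ := hy
  have hab : a < b := by omega
  -- vertices not on l strictly between a and b
  have hnotmem : ∀ e, a < e → e < b → (he : e < l'.length) → l'[e] ∉ l := by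
    intro e h1 h2 he hmem
    rcases le_or_gt e c with h3 | h3
    · exact Nat.findGreatest_is_greatest h1 h3 ⟨l'[e], hmem, List.getElem?_eq_getElem he⟩
    · have h4 : e - (c+1) < d := by omega
      refine Nat.find_min hexQ h4 ⟨l'[e], hmem, ?_⟩
      have : c + 1 + (e - (c+1)) = e := by omega
      rw [this, List.getElem?_eq_getElem he]
  set q := (l'.drop a).take (b + 1 - a) with hqdef
  have hqlen : q.length = b + 1 - a := by
    rw [hqdef, List.length_take, List.length_drop]; omega
  have hqget : ∀ n (h : n < b + 1 - a), q[n]'(by omega) = l'[a+n]'(by omega) := by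
    intro n h
    simp only [hqdef, List.getElem_take, List.getElem_drop]
  have huv : l'[a] ≠ l'[b] := by
    intro h
    have := hnd.getElem_inj_iff.mp h
    omega
  refine (h2 l'[a] (hxa ▸ hxl) l'[b] (hyb ▸ hyl) huv ⟨q, ?_, ?_, ?_, ?_, ?_⟩).elim
  · intro h; rw [h] at hqlen; simp at hqlen; omega
  · unfold List.Chain'
    rw [List.isChain_iff_getElem]
    intro n hn
    rw [hqlen] at hn
    rw [hqget n (by omega), hqget (n+1) (by omega)]
    have he1 : a + n + 1 < l'.length := by omega
    have hstep := List.isChain_iff_getElem.mp hchain (a+n) (by omega)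
    have hidx : a + (n+1) = a + n + 1 := by omega
    have hcast : l'[a + (n+1)]'(by omega) = l'[a+n+1]'(by omega) := by
      congr 1
    refine ⟨⟨hstep.1, ?_⟩, by rw [hcast]; exact hstep.2⟩
    · -- (l'[a+n], l'[a+n+1]) ∉ pathEdges l
      rw [hcast]
      intro hedge
      simp only [Set.mem_setOf_eq] at hedge
      rcases lt_trichotomy (a+n) c with h3 | h3 | h3
      · exact hnotmem (a+n+1) (by omega) (by omega) (by omega)
          (mem_of_mem_pathEdges hedge).2
      · apply hce
        have e1 : l'[c]'(by omega) = l'[a+n]'(by omega) := by congr 1; omega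
        have e2 : l'[c+1]'(by omega) = l'[a+n+1]'(by omega) := by congr 1; omega
        rw [e1, e2]; exact hedge
      · exact hnotmem (a+n) (by omega) (by omega) (by omega)
          (mem_of_mem_pathEdges hedge).1
  · exact ((List.take_sublist _ _).trans (List.drop_sublist _ _)).nodup hnd
  · rw [List.head?_eq_getElem?, List.getElem?_eq_getElem (by omega)]
    have := hqget 0 (by omega)
    simp only [Nat.add_zero] at this
    rw [this]
  · rw [List.getLast?_eq_getElem?]
    have h1 : q.length - 1 = b - a := by omega
    simp only [h1]
    rw [List.getElem?_eq_getElem (by omega), hqget (b-a) (by omega)]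
    have h2 : a + (b - a) = b := by omega
    simp only [h2]

private lemma forward_dir (E : Set (V × V)) (hacyc : Acyclic E) (s t : V)
    (l : List V) (hP : IsPathOn E s t l) (S : Set (V × V))
    (h1 : ∀ e ∈ pathEdges l, e ∉ S)
    (h2 : ∀ l' : List V, IsPathOn (E \ S) s t l' → l' = l) :
    ∀ u ∈ l, ∀ v ∈ l, u ≠ v →
      ¬ ∃ q : List V, IsPathOn ((E \ {e | e ∈ pathEdges l}) \ S) u v q := by
  classical
  obtain ⟨hlne, hlchain, hlnd, hlh, hll⟩ := hP
  obtain ⟨hlpos, hsl0⟩ := head?_some hlh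
  obtain ⟨_, htl⟩ := getLast?_some hll
  rintro u hu v hv huv ⟨q, qne, qchain, qnd, qh, ql⟩
  obtain ⟨hqpos, hq0⟩ := head?_some qh
  obtain ⟨_, hqlast⟩ := getLast?_some ql
  have hq2 : 2 ≤ q.length := by
    rcases Nat.lt_or_ge q.length 2 with h | h
    · exfalso
      apply huv
      have h1' : q.length - 1 = 0 := by omega
      rw [← hq0, ← hqlast]
      simp only [h1']
    · exact h
  have qchainE : q.Chain' (fun a b => (a, b) ∈ E) :=
    qchain.imp (fun a b hab => hab.1.1)
  have qchainES : q.Chain' (fun a b => (a, b) ∈ E \ S) :=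
    qchain.imp (fun a b hab => ⟨hab.1.1, hab.2⟩)
  obtain ⟨i, hiL, hui⟩ := List.mem_iff_getElem.mp hu
  -- least positive index of q landing on l
  have hex : ∃ n, 0 < n ∧ ∃ x ∈ l, q[n]? = some x :=
    ⟨q.length - 1, by omega, v, hv, by rw [List.getElem?_eq_getElem (by omega), hqlast]⟩
  obtain ⟨m, hmspec, hminraw⟩ :
      ∃ m, (0 < m ∧ ∃ x ∈ l, q[m]? = some x) ∧
        ∀ n < m, ¬(0 < n ∧ ∃ x ∈ l, q[n]? = some x) :=
    ⟨Nat.find hex, Nat.find_spec hex, fun n h => Nat.find_min hex h⟩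
  obtain ⟨hmpos, x, hxl, hx⟩ := hmspec
  rw [List.getElem?_eq_some_iff] at hx
  obtain ⟨hmL, hqm⟩ := hx
  have hmin : ∀ n (h1' : 0 < n) (h2' : n < m), q[n]'(lt_trans h2' hmL) ∉ l := by
    intro n h1' h2' hmem
    exact hminraw n h2' ⟨h1', q[n], hmem, List.getElem?_eq_getElem (lt_trans h2' hmL)⟩
  obtain ⟨k, hkL, hlk⟩ := List.mem_iff_getElem.mp hxl
  have hchain' : l.Chain' (fun a b => (a, b) ∈ E \ S) := by
    unfold List.Chain' at hlchain ⊢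
    rw [List.isChain_iff_getElem] at hlchain ⊢
    intro n hn
    refine ⟨hlchain n hn, h1 _ ?_⟩
    exact mem_pathEdges_iff.mpr ⟨n, by omega, rfl, rfl⟩
  rcases lt_trichotomy k i with hki | hki | hki
  · -- k < i : cycle
    have e1 : l[k] = q[m]'hmL := by rw [hlk, hqm]
    have e2 : l[i] = q[0] := by rw [hui, hq0]
    have r1 : Relation.ReflTransGen (fun a b => (a, b) ∈ E) l[k] l[i] :=
      chain'_reflTransGen hlchain i hiL k (le_of_lt hki)
    rw [e1, e2] at r1
    have r2 : Relation.ReflTransGen (fun a b => (a, b) ∈ E) q[0] (q[m]'hmL) :=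
      chain'_reflTransGen qchainE m hmL 0 (Nat.zero_le m)
    rcases Relation.reflTransGen_iff_eq_or_transGen.mp r2 with h | h
    · have := qnd.getElem_inj_iff.mp h
      omega
    · exact hacyc q[0] (h.trans_left r1)
  · -- k = i : q[m] = q[0], impossible
    have heq : q[m]'hmL = q[0] := by
      rw [hqm, hq0, ← hui, ← hlk]
      simp only [hki]
    have := qnd.getElem_inj_iff.mp heq
    omega
  · -- i < k : construct the alternative s-t path P2
    set A := l.take (i+1) with hAdef
    set B := (q.take (m+1)).tail with hBdef
    set C := l.drop (k+1) with hCdef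
    set P2 := A ++ (B ++ C) with hP2def
    have hA : A.length = i + 1 := by
      rw [hAdef, List.length_take]; omega
    have hBlen : B.length = m := by
      rw [hBdef, List.length_tail, List.length_take]; omega
    have hClen : C.length = l.length - (k+1) := by
      rw [hCdef, List.length_drop]
    have hAget : ∀ n (h : n < i + 1), A[n]'(by omega) = l[n]'(by omega) := by
      intro n h
      simp only [hAdef, List.getElem_take]
    have hBget : ∀ n (h : n < m), B[n]'(by omega) = q[n+1]'(by omega) := by
      intro n h
      simp only [hBdef, List.getElem_tail, List.getElem_take]
    have hCget : ∀ n (h : n < l.length - (k+1)), C[n]'(by omega) = l[k+1+n]'(by omega) := by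
      intro n h
      simp only [hCdef, List.getElem_drop]
    have hP2len : P2.length = (i+1) + (m + (l.length - (k+1))) := by
      rw [hP2def]
      simp only [List.length_append, hA, hBlen, hClen]
    have hget1 : ∀ n (h : n < i + 1), P2[n]'(by omega) = l[n]'(by omega) := by
      intro n h
      simp only [hP2def]
      rw [List.getElem_append_left (show n < A.length by omega)]
      exact hAget n h
    have hget2 : ∀ n (h : n < m), P2[(i+1)+n]'(by omega) = q[n+1]'(by omega) := by
      intro n h
      simp only [hP2def]
      rw [List.getElem_append_right (show A.length ≤ (i+1)+n by omega)]
      have e : (i+1) + n - A.length = n := by omega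
      simp only [e]
      rw [List.getElem_append_left (show n < B.length by omega)]
      exact hBget n h
    have hget3 : ∀ n (h : n < l.length - (k+1)),
        P2[(i+1)+m+n]'(by omega) = l[k+1+n]'(by omega) := by
      intro n h
      simp only [hP2def]
      rw [List.getElem_append_right (show A.length ≤ (i+1)+m+n by omega)]
      rw [List.getElem_append_right (show B.length ≤ (i+1)+m+n - A.length by omega)]
      have e : (i+1)+m+n - A.length - B.length = n := by omega
      simp only [e]
      exact hCget n h
    have hAnd : A.Nodup := (List.take_sublist _ _).nodup hlnd
    have hBnd : B.Nodup := ((List.tail_sublist _).trans (List.take_sublist _ _)).nodup qnd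
    have hCnd : C.Nodup := (List.drop_sublist _ _).nodup hlnd
    have hAB : A.Disjoint B := by
      intro z hzA hzB
      obtain ⟨nA, hnA, hzA'⟩ := List.mem_iff_getElem.mp hzA
      obtain ⟨nB, hnB, hzB'⟩ := List.mem_iff_getElem.mp hzB
      have hnA' : nA < i + 1 := by omega
      have hnB' : nB < m := by omega
      have hzl : z ∈ l := by
        rw [← hzA', hAget nA hnA']; exact List.getElem_mem _
      rcases lt_or_eq_of_le (show nB + 1 ≤ m by omega) with hlt | heq
      · apply hmin (nB+1) (by omega) hlt
        have hq : q[nB+1]'(by omega) = z := by rw [← hzB', hBget nB hnB']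
        rw [hq]; exact hzl
      · have hzq : q[m]'hmL = z := by
          rw [← hzB', hBget nB hnB']
          congr 1
          omega
        have hzlk : l[k] = z := by rw [hlk, ← hqm, hzq]
        have hzla : l[nA]'(by omega) = z := by rw [← hzA', hAget nA hnA']
        have := hlnd.getElem_inj_iff.mp (hzla.trans hzlk.symm)
        omega
    have hAC : A.Disjoint C := by
      intro z hzA hzC
      obtain ⟨nA, hnA, hzA'⟩ := List.mem_iff_getElem.mp hzA
      obtain ⟨nC, hnC, hzC'⟩ := List.mem_iff_getElem.mp hzC
      have hnA' : nA < i + 1 := by omega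
      have hnC' : nC < l.length - (k+1) := by omega
      have e1 : l[nA]'(by omega) = z := by rw [← hzA', hAget nA hnA']
      have e2 : l[k+1+nC]'(by omega) = z := by rw [← hzC', hCget nC hnC']
      have := hlnd.getElem_inj_iff.mp (e1.trans e2.symm)
      omega
    have hBC : B.Disjoint C := by
      intro z hzB hzC
      obtain ⟨nB, hnB, hzB'⟩ := List.mem_iff_getElem.mp hzB
      obtain ⟨nC, hnC, hzC'⟩ := List.mem_iff_getElem.mp hzC
      have hnB' : nB < m := by omega
      have hnC' : nC < l.length - (k+1) := by omega
      have e2 : l[k+1+nC]'(by omega) = z := by rw [← hzC', hCget nC hnC']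
      have hzl : z ∈ l := by rw [← e2]; exact List.getElem_mem _
      rcases lt_or_eq_of_le (show nB + 1 ≤ m by omega) with hlt | heq
      · apply hmin (nB+1) (by omega) hlt
        have hq : q[nB+1]'(by omega) = z := by rw [← hzB', hBget nB hnB']
        rw [hq]; exact hzl
      · have hzq : q[m]'hmL = z := by
          rw [← hzB', hBget nB hnB']
          congr 1
          omega
        have hzlk : l[k] = z := by rw [hlk, ← hqm, hzq]
        have := hlnd.getElem_inj_iff.mp (hzlk.trans e2.symm)
        omega
    have hBne : B ≠ [] := by
      intro h; rw [h] at hBlen; simp at hBlen; omega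
    have hP2nd : P2.Nodup := by
      rw [hP2def, List.nodup_append, List.nodup_append]
      refine ⟨hAnd, ⟨hBnd, hCnd, fun a ha b hb hab => hBC ha (hab ▸ hb)⟩, fun z hzA w hzBC hzw => ?_⟩
      rcases List.mem_append.mp hzBC with h | h
      · exact hAB hzA (hzw ▸ h)
      · exact hAC hzA (hzw ▸ h)
    have hP2chain : P2.Chain' (fun a b => (a, b) ∈ E \ S) := by
      unfold List.Chain'
      rw [hP2def, List.isChain_append]
      refine ⟨hchain'.prefix (List.take_prefix _ _), ?_, ?_⟩
      · rw [List.isChain_append]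
        refine ⟨(qchainES.prefix (List.take_prefix _ _)).tail,
          hchain'.suffix (List.drop_suffix _ _), ?_⟩
        intro xx hxx yy hyy
        rw [Option.mem_def, List.getLast?_eq_getElem?, List.getElem?_eq_some_iff] at hxx
        obtain ⟨hx1, hx2⟩ := hxx
        rw [Option.mem_def, List.head?_eq_getElem?, List.getElem?_eq_some_iff] at hyy
        obtain ⟨hy1, hy2⟩ := hyy
        have hkk : k + 1 < l.length := by omega
        have hxval : xx = l[k] := by
          rw [← hx2]
          have h5 : B.length - 1 = m - 1 := by omega
          simp only [h5]
          rw [hBget (m-1) (by omega)]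
          have h6 : m - 1 + 1 = m := by omega
          simp only [h6]
          rw [hqm, hlk]
        have hyval : yy = l[k+1]'hkk := by
          rw [← hy2, hCget 0 (by omega)]
        rw [hxval, hyval]
        have := List.isChain_iff_getElem.mp hchain' k (by omega)
        simpa using this
      · intro xx hxx yy hyy
        rw [Option.mem_def, List.getLast?_eq_getElem?, List.getElem?_eq_some_iff] at hxx
        obtain ⟨hx1, hx2⟩ := hxx
        rw [Option.mem_def, List.head?_eq_getElem?, List.getElem?_eq_some_iff] at hyy
        obtain ⟨hy1, hy2⟩ := hyy
        have hxval : xx = q[0] := by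
          rw [← hx2]
          have h5 : A.length - 1 = i := by omega
          simp only [h5]
          rw [hAget i (by omega), hui, hq0]
        have hyval : yy = q[1]'(by omega) := by
          rw [← hy2, List.getElem_append_left (show 0 < B.length by omega),
            hBget 0 (by omega)]
        rw [hxval, hyval]
        have := List.isChain_iff_getElem.mp qchain 0 (by omega)
        exact ⟨this.1.1, this.2⟩
    have hP2pos : 0 < P2.length := by omega
    have hP2ne : P2 ≠ [] := List.length_pos_iff.mp hP2pos
    have hP2h : P2.head? = some s := by
      rw [List.head?_eq_getElem?, List.getElem?_eq_getElem hP2pos]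
      rw [hget1 0 (by omega), hsl0]
    have hP2l : P2.getLast? = some t := by
      rw [List.getLast?_eq_getElem?, List.getElem?_eq_getElem (by omega)]
      rcases Nat.lt_or_ge (k+1) l.length with hkk | hkk
      · have hidx : P2.length - 1 = (i+1) + m + (l.length - (k+1) - 1) := by omega
        simp only [hidx]
        rw [hget3 (l.length - (k+1) - 1) (by omega)]
        have hidx2 : k + 1 + (l.length - (k+1) - 1) = l.length - 1 := by omega
        simp only [hidx2, htl]
      · have hidx : P2.length - 1 = (i+1) + (m - 1) := by omega
        simp only [hidx]
        rw [hget2 (m-1) (by omega)]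
        have h6 : m - 1 + 1 = m := by omega
        simp only [h6]
        rw [hqm, ← hlk]
        have h7 : k = l.length - 1 := by omega
        simp only [h7, htl]
    have hP2eq : P2 = l := h2 P2 ⟨hP2ne, hP2chain, hP2nd, hP2h, hP2l⟩
    have hedge0 := List.isChain_iff_getElem.mp qchain 0 (by omega)
    apply hedge0.1.2
    have e1 : P2[i]'(by omega) = q[0] := by
      rw [hget1 i (by omega), hui, hq0]
    have e2 : P2[i+1]'(by omega) = q[1]'(by omega) := hget2 0 (by omega)
    have hfin : (q[0], q[1]'(by omega)) ∈ pathEdges P2 :=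
      mem_pathEdges_iff.mpr ⟨i, by omega, e1, e2⟩
    exact (congrArg pathEdges hP2eq) ▸ hfin

/-- Let `G` be a DAG whose `s`-`t` paths all have the same length (they
coincide with the shortest `s`-`t` paths), let `l` be an `s`-`t` path and
`H = G − E(P)`. Then `S ⊆ E(G)` is an anti-forcing set for `P` (i.e. `S ∩ E(P) = ∅` and
`P` is the unique `s`-`t` path in `G − S`) iff `S ∩ E(P) = ∅` and `S` is a multiway cut
for the terminal set `V(P)` in `H`. -/
theorem stmt11 (E : Set (V × V)) (hacyc : Acyclic E) (s t : V)
    (hshort : ∀ l l' : List V, IsPathOn E s t l → IsPathOn E s t l' → l.length = l'.length)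
    (l : List V) (hP : IsPathOn E s t l) (S : Set (V × V)) (hSE : S ⊆ E) :
    ((∀ e ∈ pathEdges l, e ∉ S) ∧ ∀ l' : List V, IsPathOn (E \ S) s t l' → l' = l) ↔
      ((∀ e ∈ pathEdges l, e ∉ S) ∧
        ∀ u ∈ l, ∀ v ∈ l, u ≠ v →
          ¬ ∃ q : List V, IsPathOn ((E \ {e | e ∈ pathEdges l}) \ S) u v q) := by
  constructor
  · rintro ⟨h1, h2⟩
    exact ⟨h1, forward_dir E hacyc s t l hP S h1 h2⟩
  · rintro ⟨h1, h2⟩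
    exact ⟨h1, backward_dir E s t l hP S h2⟩
end

section
/- Let G be a connected edge-weighted multigraph, let w_min be the minimum edge weight, E_min the set of edges of weight w_min, and F a maximal forest of the subgraph (V(G), E_min). Then F is contained in some minimum-weight spanning tree of G. -/
variable {V ε : Type*} [Fintype V] [Fintype ε]

/-- A multigraph on vertex set `V` is given by an edge type `ε` and an endpoint map
`ends : ε → Sym2 V`. A set `F` of edges is a forest iff every nonempty subfamily touches
strictly more vertices than it has edges. -/
def IsForest (ends : ε → Sym2 V) (F : Set ε) : Prop :=
  ∀ F' ⊆ F, F'.Nonempty → F'.ncard < {v : V | ∃ e ∈ F', v ∈ ends e}.ncard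

/-- The (multi)graph with edge set `T` is connected. -/
def Conn (ends : ε → Sym2 V) (T : Set ε) : Prop :=
  ∀ a b : V, Relation.ReflTransGen (fun x y => ∃ e ∈ T, ends e = s(x, y)) a b

/-- `T` is a spanning tree. -/
def IsSpanningTree (ends : ε → Sym2 V) (T : Set ε) : Prop :=
  IsForest ends T ∧ Conn ends T

/-- `T` is a minimum-weight spanning tree. -/
noncomputable def stWeight (w : ε → ℝ) (T : Set ε) : ℝ := ∑ᶠ e ∈ T, w e

def IsMST (ends : ε → Sym2 V) (w : ε → ℝ) (T : Set ε) : Prop :=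
  IsSpanningTree ends T ∧ ∀ T' : Set ε, IsSpanningTree ends T' → stWeight w T ≤ stWeight w T'

set_option linter.unusedSectionVars false

namespace Stmt12Aux

def R (ends : ε → Sym2 V) (S : Set ε) (x y : V) : Prop := ∃ e ∈ S, ends e = s(x, y)

def CR (ends : ε → Sym2 V) (S : Set ε) : V → V → Prop := Relation.ReflTransGen (R ends S)

def VS (ends : ε → Sym2 V) (S : Set ε) : Set V := {v | ∃ e ∈ S, v ∈ ends e}

variable {ends : ε → Sym2 V} {S S' T P Q D : Set ε} {x y u v a b : V} {e f g : ε}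

theorem R.symm (h : R ends S x y) : R ends S y x := by
  obtain ⟨e, he, hx⟩ := h
  exact ⟨e, he, hx.trans (Sym2.eq_swap)⟩

theorem CR.symm (h : CR ends S x y) : CR ends S y x := by
  induction h with
  | refl => exact Relation.ReflTransGen.refl
  | tail _ hstep ih => exact Relation.ReflTransGen.head hstep.symm ih

theorem CR.mono (hs : S ⊆ S') (h : CR ends S x y) : CR ends S' x y := by
  induction h with
  | refl => exact Relation.ReflTransGen.refl
  | tail _ hstep ih =>
    obtain ⟨e, he, hx⟩ := hstep
    exact ih.tail ⟨e, hs he, hx⟩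

theorem CR.single (he : e ∈ S) (h : ends e = s(x, y)) : CR ends S x y :=
  Relation.ReflTransGen.single ⟨e, he, h⟩

theorem conn_iff : Conn ends T ↔ ∀ a b : V, CR ends T a b := Iff.rfl

theorem conn_mono (hT : Conn ends T)
    (h : ∀ g ∈ T, ∀ p q : V, ends g = s(p, q) → CR ends S p q) : Conn ends S := by
  intro c d
  have hcd : CR ends T c d := hT c d
  induction hcd with
  | refl => exact Relation.ReflTransGen.refl
  | tail _ hstep ih =>
    obtain ⟨e, he, hx⟩ := hstep
    exact ih.trans (h e he _ _ hx)

theorem isForest_iff : IsForest ends S ↔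
    ∀ F' ⊆ S, F'.Nonempty → F'.ncard < (VS ends F').ncard := Iff.rfl

theorem forest_mono (h : IsForest ends S) (hs : S' ⊆ S) : IsForest ends S' :=
  fun F' hF' => h F' (hF'.trans hs)

theorem vs_insert (h : ends e = s(x, y)) :
    VS ends (insert e S) = insert x (insert y (VS ends S)) := by
  ext v
  simp only [VS, Set.mem_setOf_eq, Set.mem_insert_iff]
  constructor
  · rintro ⟨e', he', hv⟩
    rcases he' with rfl | he'
    · rw [h, Sym2.mem_iff] at hv; tauto
    · exact Or.inr (Or.inr ⟨e', he', hv⟩)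
  · rintro (rfl | rfl | ⟨e', he', hv⟩)
    · exact ⟨e, Or.inl rfl, by rw [h]; exact Sym2.mem_mk_left _ _⟩
    · exact ⟨e, Or.inl rfl, by rw [h]; exact Sym2.mem_mk_right _ _⟩
    · exact ⟨e', Or.inr he', hv⟩

theorem vs_mono (hs : S ⊆ S') : VS ends S ⊆ VS ends S' := by
  rintro v ⟨e, he, hv⟩; exact ⟨e, hs he, hv⟩

end Stmt12Aux

namespace Stmt12Aux

variable {V ε : Type*} [Fintype V] [Fintype ε]
variable {ends : ε → Sym2 V} {S S' T P Q D : Set ε} {x y u v a b : V} {e f g : ε}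

set_option linter.unusedSectionVars false

/-- From a connection one can extract an edge set `P` with few vertices. -/
theorem pathcount (h : CR ends S x y) :
    ∃ P ⊆ S, (VS ends P ∪ {x, y}).ncard ≤ P.ncard + 1 := by
  induction h with
  | refl =>
    refine ⟨∅, Set.empty_subset _, ?_⟩
    have : VS ends (∅ : Set ε) = ∅ := by
      ext v; simp [VS]
    rw [this, Set.empty_union]
    have : ({x, x} : Set V) = {x} := by simp
    rw [this, Set.ncard_singleton]; simp
  | @tail c d _ hstep ih =>
    obtain ⟨P, hPS, hP⟩ := ih
    obtain ⟨g, hg, hends⟩ := hstep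
    by_cases hgP : g ∈ P
    · refine ⟨P, hPS, ?_⟩
      have hc : c ∈ VS ends P := ⟨g, hgP, by rw [hends]; exact Sym2.mem_mk_left _ _⟩
      have hd : d ∈ VS ends P := ⟨g, hgP, by rw [hends]; exact Sym2.mem_mk_right _ _⟩
      refine le_trans (Set.ncard_le_ncard ?_ (Set.toFinite _)) hP
      rintro v (hv | rfl | rfl)
      · exact Or.inl hv
      · exact Or.inr (Or.inl rfl)
      · exact Or.inl hd
    · refine ⟨insert g P, Set.insert_subset hg hPS, ?_⟩
      rw [Set.ncard_insert_of_notMem hgP (Set.toFinite _)]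
      have hsub : VS ends (insert g P) ∪ {x, d} ⊆ insert d (VS ends P ∪ {x, c}) := by
        rw [vs_insert hends]
        rintro v (hv | rfl | rfl)
        · rcases hv with rfl | rfl | hv
          · exact Or.inr (Or.inr (Or.inr rfl))
          · exact Or.inl rfl
          · exact Or.inr (Or.inl hv)
        · exact Or.inr (Or.inr (Or.inl rfl))
        · exact Or.inl rfl
      calc (VS ends (insert g P) ∪ {x, d}).ncard
          ≤ (insert d (VS ends P ∪ {x, c})).ncard :=
            Set.ncard_le_ncard hsub (Set.toFinite _)
        _ ≤ (VS ends P ∪ {x, c}).ncard + 1 := Set.ncard_insert_le _ _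
        _ ≤ P.ncard + 1 + 1 := by omega

/-- Removing an edge of a forest disconnects its endpoints. -/
theorem forest_delete (hT : IsForest ends T) (hf : f ∈ T) (hends : ends f = s(u, v)) :
    ¬ CR ends (T \ {f}) u v := by
  intro h
  obtain ⟨P, hPS, hP⟩ := pathcount h
  have hfP : f ∉ P := fun hfP => (hPS hfP).2 rfl
  have hsub : insert f P ⊆ T := Set.insert_subset hf (hPS.trans Set.diff_subset)
  have hlt := hT (insert f P) hsub ⟨f, Or.inl rfl⟩
  rw [Set.ncard_insert_of_notMem hfP (Set.toFinite _)] at hlt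
  have hvs : {v_1 : V | ∃ e ∈ insert f P, v_1 ∈ ends e} = VS ends P ∪ {u, v} := by
    have := vs_insert (S := P) hends
    rw [show {v_1 : V | ∃ e ∈ insert f P, v_1 ∈ ends e} = VS ends (insert f P) from rfl, this]
    ext w; simp only [Set.mem_insert_iff, Set.mem_union, Set.mem_singleton_iff]; tauto
  rw [hvs] at hlt
  omega

/-- A forest with two touched but disconnected vertices has at least 2 more
vertices than edges. -/
theorem forest_split (hQ : IsForest ends Q) (ha : a ∈ VS ends Q) (hb : b ∈ VS ends Q)
    (hab : ¬ CR ends Q a b) : Q.ncard + 2 ≤ (VS ends Q).ncard := by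
  classical
  set Qa : Set ε := {e ∈ Q | ∀ w_1 ∈ ends e, CR ends Q a w_1} with hQa_def
  set Qr : Set ε := Q \ Qa with hQr_def
  -- endpoints of an edge of Q are connected to each other
  have hedge : ∀ e ∈ Q, ∀ p ∈ ends e, ∀ q ∈ ends e, CR ends Q p q := by
    intro e he p hp q hq
    obtain ⟨⟨p', q'⟩, hpq⟩ := Quot.exists_rep (ends e)
    have hends : ends e = s(p', q') := hpq.symm
    rw [hends, Sym2.mem_iff] at hp hq
    have h1 : CR ends Q p' q' := CR.single he hends
    rcases hp with rfl | rfl <;> rcases hq with rfl | rfl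
    · exact Relation.ReflTransGen.refl
    · exact h1
    · exact h1.symm
    · exact Relation.ReflTransGen.refl
  -- membership in Qa propagates through shared vertices
  have hQa_alt : ∀ e ∈ Q, (∃ w_1 ∈ ends e, CR ends Q a w_1) → e ∈ Qa := by
    intro e he ⟨w1, hw1, hcr⟩
    exact ⟨he, fun w2 hw2 => hcr.trans (hedge e he w1 hw1 w2 hw2)⟩
  have hVdisj : Disjoint (VS ends Qa) (VS ends Qr) := by
    rw [Set.disjoint_left]
    rintro w ⟨e, he, hwe⟩ ⟨e', he', hwe'⟩
    have hcr : CR ends Q a w := he.2 w hwe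
    exact he'.2 (hQa_alt e' he'.1 ⟨w, hwe', hcr⟩)
  have hVunion : VS ends Qa ∪ VS ends Qr = VS ends Q := by
    apply Set.Subset.antisymm
    · rintro w (hw | hw)
      · exact vs_mono (fun e he => he.1) hw
      · exact vs_mono Set.diff_subset hw
    · rintro w ⟨e, he, hwe⟩
      by_cases heQa : e ∈ Qa
      · exact Or.inl ⟨e, heQa, hwe⟩
      · exact Or.inr ⟨e, ⟨he, heQa⟩, hwe⟩
  have haQa : a ∈ VS ends Qa := by
    obtain ⟨e, he, hae⟩ := ha
    exact ⟨e, hQa_alt e he ⟨a, hae, Relation.ReflTransGen.refl⟩, hae⟩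
  have hbQr : b ∈ VS ends Qr := by
    obtain ⟨e, he, hbe⟩ := hb
    refine ⟨e, ⟨he, fun heQa => hab (heQa.2 b hbe)⟩, hbe⟩
  have hQa_ne : Qa.Nonempty := by obtain ⟨e, he, _⟩ := haQa; exact ⟨e, he⟩
  have hQr_ne : Qr.Nonempty := by obtain ⟨e, he, _⟩ := hbQr; exact ⟨e, he⟩
  have h1 := hQ Qa (fun e he => he.1) hQa_ne
  have h2 := hQ Qr Set.diff_subset hQr_ne
  have hcard : Q.ncard = Qa.ncard + Qr.ncard := by
    rw [hQr_def, ← Set.ncard_diff_add_ncard_of_subset (fun e (he : e ∈ Qa) => he.1)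
      (Set.toFinite _)]
    omega
  have hvcard : (VS ends Qa).ncard + (VS ends Qr).ncard = (VS ends Q).ncard := by
    rw [← hVunion, Set.ncard_union_eq hVdisj (Set.toFinite _) (Set.toFinite _)]
  have e1 : Qa.ncard < (VS ends Qa).ncard := h1
  have e2 : Qr.ncard < (VS ends Qr).ncard := h2
  omega

/-- Augmentation: adding an edge between disconnected vertices keeps a forest. -/
theorem forest_insert (hP : IsForest ends P) (hends : ends g = s(x, y))
    (hxy : ¬ CR ends P x y) : IsForest ends (insert g P) := by
  have hxney : x ≠ y := by rintro rfl; exact hxy Relation.ReflTransGen.refl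
  intro F' hF' hne
  by_cases hgF' : g ∈ F'
  · have hQ : F' \ {g} ⊆ P := by
      rintro e ⟨he, hne'⟩
      rcases hF' he with rfl | h
      · exact absurd rfl hne'
      · exact h
    set Q := F' \ {g} with hQdef
    have hgQ : g ∉ Q := fun h => h.2 rfl
    have hF'eq : F' = insert g Q := by
      rw [hQdef]; ext e
      simp only [Set.mem_insert_iff, Set.mem_diff, Set.mem_singleton_iff]
      constructor
      · intro he
        by_cases h : e = g
        · exact Or.inl h
        · exact Or.inr ⟨he, h⟩
      · rintro (rfl | ⟨he, _⟩)
        · exact hgF'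
        · exact he
    have hQforest : IsForest ends Q := forest_mono hP hQ
    have hxyQ : ¬ CR ends Q x y := fun h => hxy (h.mono hQ)
    have hvs : {v_1 : V | ∃ e ∈ F', v_1 ∈ ends e} = insert x (insert y (VS ends Q)) := by
      rw [hF'eq]; exact vs_insert hends
    rw [hvs, hF'eq, Set.ncard_insert_of_notMem hgQ (Set.toFinite _)]
    by_cases hxQ : x ∈ VS ends Q
    · by_cases hyQ : y ∈ VS ends Q
      · have := forest_split hQforest hxQ hyQ hxyQ
        have hins : insert x (insert y (VS ends Q)) = VS ends Q := by
          rw [Set.insert_eq_self.2 hyQ, Set.insert_eq_self.2 hxQ]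
        rw [hins]; omega
      · -- y ∉ VS Q, x ∈ VS Q so Q nonempty
        have hQne : Q.Nonempty := by obtain ⟨e, he, _⟩ := hxQ; exact ⟨e, he⟩
        have h1 : Q.ncard < (VS ends Q).ncard := hQforest Q subset_rfl hQne
        have : (insert x (insert y (VS ends Q))).ncard = (insert y (VS ends Q)).ncard := by
          rw [Set.insert_eq_self.2 (Set.mem_insert_iff.2 (Or.inr hxQ))]
        rw [this, Set.ncard_insert_of_notMem hyQ (Set.toFinite _)]
        exact Nat.add_lt_add_right h1 1
    · rcases Set.eq_empty_or_nonempty Q with hQe | hQne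
      · have hvse : VS ends Q = ∅ := by rw [hQe]; ext w; simp [VS]
        rw [hvse, hQe]
        have h2 : ({x, y} : Set V).ncard = 2 := Set.ncard_pair hxney
        have : (insert x (insert y (∅ : Set V))) = {x, y} := by simp
        rw [this, h2]
        simp
      · have h1 : Q.ncard < (VS ends Q).ncard := hQforest Q subset_rfl hQne
        have hxout : x ∉ insert y (VS ends Q) := by
          rintro (rfl | h); exact hxney rfl; exact hxQ h
        rw [Set.ncard_insert_of_notMem hxout (Set.toFinite _)]
        have : (VS ends Q).ncard ≤ (insert y (VS ends Q)).ncard :=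
          Set.ncard_le_ncard (Set.subset_insert _ _) (Set.toFinite _)
        omega
  · exact hP F' (fun e he => ((hF' he).resolve_left (fun h => hgF' (h ▸ he)))) hne

end Stmt12Aux

namespace Stmt12Aux

variable {V ε : Type*} [Fintype V] [Fintype ε]
variable {ends : ε → Sym2 V} {S S' T P Q D : Set ε} {x y u v a b p q : V} {e f g : ε}

set_option linter.unusedSectionVars false

/-- "Jump" decomposition: a connection either avoids `f`, or can be split at `f`. -/
theorem jump (h : CR ends S p q) (hf : f ∈ S) (hends : ends f = s(u, v)) :
    CR ends (S \ {f}) p q ∨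
    (CR ends (S \ {f}) p u ∧ CR ends (S \ {f}) v q) ∨
    (CR ends (S \ {f}) p v ∧ CR ends (S \ {f}) u q) := by
  induction h with
  | refl => exact Or.inl Relation.ReflTransGen.refl
  | @tail c d _ hstep ih =>
    obtain ⟨g, hg, hgends⟩ := hstep
    by_cases hgf : g = f
    · subst hgf
      rw [hends] at hgends
      rcases Sym2.eq_iff.1 hgends with ⟨rfl, rfl⟩ | ⟨rfl, rfl⟩
      · -- step is c = u → d = v
        rcases ih with h1 | ⟨h2a, h2b⟩ | ⟨h3a, h3b⟩
        · exact Or.inr (Or.inl ⟨h1, Relation.ReflTransGen.refl⟩)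
        · exact Or.inl (h2a.trans h2b.symm)
        · exact Or.inl h3a
      · -- step is c = v → d = u
        rcases ih with h1 | ⟨h2a, h2b⟩ | ⟨h3a, h3b⟩
        · exact Or.inr (Or.inr ⟨h1, Relation.ReflTransGen.refl⟩)
        · exact Or.inl h2a
        · exact Or.inl (h3a.trans h3b.symm)
    · have hg' : g ∈ S \ {f} := ⟨hg, hgf⟩
      have hstep' : CR ends (S \ {f}) c d := CR.single hg' hgends
      rcases ih with h1 | ⟨h2a, h2b⟩ | ⟨h3a, h3b⟩
      · exact Or.inl (h1.trans hstep')
      · exact Or.inr (Or.inl ⟨h2a, h2b.trans hstep'⟩)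
      · exact Or.inr (Or.inr ⟨h3a, h3b.trans hstep'⟩)

/-- In a forest, connections avoiding `f` and avoiding `f'` separately can avoid both. -/
theorem forest_two (hT : IsForest ends T) {f f' : ε}
    (h1 : CR ends (T \ {f}) x y) (h2 : CR ends (T \ {f'}) x y) :
    CR ends ((T \ {f}) \ {f'}) x y := by
  classical
  by_cases hff' : f = f'
  · subst hff'
    rwa [Set.diff_diff, Set.union_self]
  by_cases hfT : f ∈ T
  swap
  · rwa [Set.diff_singleton_eq_self hfT] at h1 ⊢
  by_cases hf'T : f' ∈ T
  swap
  · rw [Set.diff_singleton_eq_self (fun h => hf'T (Set.mem_of_mem_diff h))]; exact h1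
  obtain ⟨⟨u', v'⟩, hpq'⟩ := Quot.exists_rep (ends f')
  have hends' : ends f' = s(u', v') := hpq'.symm
  obtain ⟨⟨u, v⟩, hpq⟩ := Quot.exists_rep (ends f)
  have hends : ends f = s(u, v) := hpq.symm
  have hf'mem : f' ∈ T \ {f} := ⟨hf'T, fun h => hff' (Set.mem_singleton_iff.1 h).symm⟩
  have hfmem : f ∈ T \ {f'} := ⟨hfT, fun h => hff' (Set.mem_singleton_iff.1 h)⟩
  have J1 := jump h1 hf'mem hends'
  have J2 := jump h2 hfmem hends
  have hcomm : (T \ {f'}) \ {f} = (T \ {f}) \ {f'} := by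
    rw [Set.diff_diff, Set.diff_diff, Set.union_comm]
  rw [hcomm] at J2
  rcases J1 with hdone | hc1
  · exact hdone
  rcases J2 with hdone | hc2
  · exact hdone
  exfalso
  have hS0f' : (T \ {f}) \ {f'} ⊆ T \ {f'} := by
    rw [← hcomm]; exact Set.diff_subset
  have key : CR ends (T \ {f'}) u' v' := by
    have hfstep : CR ends (T \ {f'}) u v := CR.single hfmem hends
    rcases hc1 with ⟨ha1, hb1⟩ | ⟨ha1, hb1⟩ <;> rcases hc2 with ⟨ha2, hb2⟩ | ⟨ha2, hb2⟩
    · -- x~u', v'~y ; x~u, v~y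
      exact ((((ha1.symm.mono hS0f').trans (ha2.mono hS0f')).trans hfstep).trans
        (hb2.mono hS0f')).trans (hb1.symm.mono hS0f')
    · -- x~u', v'~y ; x~v, u~y
      exact ((((ha1.symm.mono hS0f').trans (ha2.mono hS0f')).trans hfstep.symm).trans
        (hb2.mono hS0f')).trans (hb1.symm.mono hS0f')
    · -- x~v', u'~y ; x~u, v~y
      exact ((((hb1.mono hS0f').trans (hb2.symm.mono hS0f')).trans hfstep.symm).trans
        (ha2.symm.mono hS0f')).trans (ha1.mono hS0f')
    · -- x~v', u'~y ; x~v, u~y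
      exact ((((hb1.mono hS0f').trans (hb2.symm.mono hS0f')).trans hfstep).trans
        (ha2.symm.mono hS0f')).trans (ha1.mono hS0f')
  exact forest_delete hT hf'T hends' key

/-- In a forest, if `x,y` stay connected after removing any single edge of `D`,
they stay connected after removing all of `D`. -/
theorem forest_avoid (hD : D.Finite) : ∀ T : Set ε, IsForest ends T → CR ends T x y →
    (∀ f ∈ D, CR ends (T \ {f}) x y) → CR ends (T \ D) x y := by
  refine Set.Finite.induction_on D hD ?_ ?_
  · intro T _ hxy _
    rwa [Set.diff_empty]
  · intro f D' _ hD'fin ih T hT hxy hall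
    have h1 : CR ends (T \ {f}) x y := hall f (Set.mem_insert _ _)
    have hT1 : IsForest ends (T \ {f}) := forest_mono hT Set.diff_subset
    have hall' : ∀ f' ∈ D', CR ends ((T \ {f}) \ {f'}) x y := by
      intro f' hf'
      by_cases hef : f' = f
      · subst hef
        rwa [Set.diff_diff, Set.union_self]
      · exact forest_two hT h1 (hall f' (Set.mem_insert_of_mem _ hf'))
    have := ih (T \ {f}) hT1 h1 hall'
    rwa [Set.diff_diff, ← Set.insert_eq] at this

end Stmt12Aux

namespace Stmt12Aux

variable {V ε : Type*} [Fintype V] [Fintype ε]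
variable {ends : ε → Sym2 V} {S S' T P Q D : Set ε} {x y u v a b p q : V} {e f g : ε}
variable {w : ε → ℝ}

set_option linter.unusedSectionVars false

theorem stW_eq (w : ε → ℝ) (S : Set ε) :
    stWeight w S = ∑ e ∈ (Set.toFinite S).toFinset, w e := by
  rw [stWeight, ← finsum_mem_coe_finset]
  congr 1
  simp

theorem stW_insert (w : ε → ℝ) (h : e ∉ S) :
    stWeight w (insert e S) = w e + stWeight w S := by
  classical
  rw [stW_eq, stW_eq]
  have h1 : (Set.toFinite (insert e S)).toFinset = insert e (Set.toFinite S).toFinset := by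
    ext a
    simp only [Set.Finite.mem_toFinset, Finset.mem_insert]
    exact Iff.rfl
  rw [h1, Finset.sum_insert (by simpa using h)]

theorem stW_diff (w : ε → ℝ) (h : f ∈ S) :
    stWeight w (S \ {f}) = stWeight w S - w f := by
  classical
  rw [stW_eq, stW_eq]
  have h1 : (Set.toFinite (S \ {f})).toFinset = (Set.toFinite S).toFinset.erase f := by
    ext a
    simp only [Set.Finite.mem_toFinset, Finset.mem_erase]
    constructor
    · rintro ⟨h1, h2⟩; exact ⟨h2, h1⟩
    · rintro ⟨h1, h2⟩; exact ⟨h2, h1⟩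
  rw [h1, eq_sub_iff_add_eq, Finset.sum_erase_add _ _ (by simpa using h)]

/-- Any forest extends to a spanning tree (in a connected graph). -/
theorem exists_st (hconn : Conn ends Set.univ) {F : Set ε} (hF : IsForest ends F) :
    ∃ T : Set ε, IsSpanningTree ends T ∧ F ⊆ T := by
  classical
  set A : Set (Set ε) := {S | F ⊆ S ∧ IsForest ends S} with hA
  obtain ⟨M, ⟨hFM, hMf⟩, hmax⟩ :=
    Set.exists_max_image A Set.ncard (Set.toFinite A) ⟨F, subset_rfl, hF⟩
  refine ⟨M, ⟨hMf, ?_⟩, hFM⟩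
  apply conn_mono hconn
  intro g _ p' q' hends
  by_contra hnc
  have hgM : g ∉ M := fun hmem => hnc (CR.single hmem hends)
  have hins : IsForest ends (insert g M) := forest_insert hMf hends hnc
  have hmem : insert g M ∈ A := ⟨hFM.trans (Set.subset_insert _ _), hins⟩
  have := hmax _ hmem
  rw [Set.ncard_insert_of_notMem hgM (Set.toFinite _)] at this
  omega

end Stmt12Aux

/-- In a connected edge-weighted multigraph, any maximal forest `F` of the
subgraph formed by the edges of minimum weight `wmin` is contained in some minimum-weight
spanning tree. -/
theorem stmt12 (ends : ε → Sym2 V) (w : ε → ℝ) (hconn : Conn ends Set.univ)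
    (wmin : ℝ) (hwmin : IsLeast (Set.range w) wmin)
    (F : Set ε) (hFsub : F ⊆ {e | w e = wmin}) (hF : IsForest ends F)
    (hFmax : ∀ F' : Set ε, F ⊆ F' → F' ⊆ {e | w e = wmin} → IsForest ends F' → F' = F) :
    ∃ T : Set ε, IsMST ends w T ∧ F ⊆ T := by
  classical
  open Stmt12Aux in
  -- a spanning tree exists
  obtain ⟨T0, hT0, _⟩ := Stmt12Aux.exists_st hconn hF
  -- a minimum-weight spanning tree exists
  obtain ⟨Tm, hTm, hTmmin⟩ := Set.exists_min_image {T : Set ε | IsSpanningTree ends T}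
    (stWeight w) (Set.toFinite _) ⟨T0, hT0⟩
  have hTmMST : IsMST ends w Tm := ⟨hTm, fun T' hT' => hTmmin T' hT'⟩
  -- among MSTs, pick one minimizing the number of missing edges of F
  obtain ⟨T, hTmst, hmin⟩ := Set.exists_min_image {T : Set ε | IsMST ends w T}
    (fun T => (F \ T).ncard) (Set.toFinite _) ⟨Tm, hTmMST⟩
  refine ⟨T, hTmst, ?_⟩
  by_contra hFT
  obtain ⟨e, heF, heT⟩ : ∃ e, e ∈ F ∧ e ∉ T := by
    by_contra h
    push_neg at h
    exact hFT (fun e he => h e he)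
  obtain ⟨⟨hTforest, hTconn⟩, hTopt⟩ := hTmst
  obtain ⟨⟨x, y⟩, hxy⟩ := Quot.exists_rep (ends e)
  have hends_e : ends e = s(x, y) := hxy.symm
  have hnc : ¬ Stmt12Aux.CR ends (F \ {e}) x y := Stmt12Aux.forest_delete hF heF hends_e
  have hxCRy : Stmt12Aux.CR ends T x y := hTconn x y
  -- find an edge f of T outside F whose removal separates x from y
  obtain ⟨f, ⟨hfT, hfF⟩, hfcut⟩ :
      ∃ f ∈ T \ F, ¬ Stmt12Aux.CR ends (T \ {f}) x y := by
    by_contra h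
    push_neg at h
    have h2 : Stmt12Aux.CR ends (T \ (T \ F)) x y :=
      Stmt12Aux.forest_avoid (Set.toFinite (T \ F)) T hTforest hxCRy h
    rw [Set.diff_diff_right_self] at h2
    have hsub : T ∩ F ⊆ F \ {e} := fun g hg => ⟨hg.2, fun hge => heT (hge ▸ hg.1)⟩
    exact hnc (h2.mono hsub)
  obtain ⟨⟨u, v⟩, huv⟩ := Quot.exists_rep (ends f)
  have hends_f : ends f = s(u, v) := huv.symm
  set T'' : Set ε := insert e (T \ {f}) with hT''def
  have heT' : e ∉ T \ {f} := fun h => heT h.1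
  have hT''forest : IsForest ends T'' :=
    Stmt12Aux.forest_insert (Stmt12Aux.forest_mono hTforest Set.diff_subset) hends_e hfcut
  have hsubT'' : T \ {f} ⊆ T'' := Set.subset_insert _ _
  have hestep : Stmt12Aux.CR ends T'' x y :=
    Stmt12Aux.CR.single (Set.mem_insert _ _) hends_e
  have huvT'' : Stmt12Aux.CR ends T'' u v := by
    rcases Stmt12Aux.jump hxCRy hfT hends_f with h1 | ⟨h2a, h2b⟩ | ⟨h3a, h3b⟩
    · exact absurd h1 hfcut
    · exact ((h2a.symm.mono hsubT'').trans hestep).trans (h2b.symm.mono hsubT'')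
    · exact ((h3b.mono hsubT'').trans hestep.symm).trans (h3a.mono hsubT'')
  have hT''conn : Conn ends T'' := by
    apply Stmt12Aux.conn_mono hTconn
    intro g hg p' q' hends_g
    by_cases hgf : g = f
    · subst hgf
      rw [hends_f] at hends_g
      rcases Sym2.eq_iff.1 hends_g.symm with ⟨rfl, rfl⟩ | ⟨rfl, rfl⟩
      · exact huvT''
      · exact huvT''.symm
    · refine Stmt12Aux.CR.single (hsubT'' ?_) hends_g
      exact Set.mem_diff_singleton.2 ⟨hg, hgf⟩
  have hwe : w e = wmin := hFsub heF
  have hwf : wmin ≤ w f := hwmin.2 ⟨f, rfl⟩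
  have hweight : stWeight w T'' ≤ stWeight w T := by
    rw [hT''def, Stmt12Aux.stW_insert w heT', Stmt12Aux.stW_diff w hfT]
    linarith
  have hT''mst : IsMST ends w T'' :=
    ⟨⟨hT''forest, hT''conn⟩, fun T' hT' => le_trans hweight (hTopt T' hT')⟩
  have hdiff : F \ T'' = (F \ T) \ {e} := by
    ext g
    simp only [Set.mem_diff, hT''def, Set.mem_insert_iff, Set.mem_singleton_iff]
    constructor
    · rintro ⟨hgF, hgn⟩
      push_neg at hgn
      obtain ⟨hgne, hgn2⟩ := hgn
      refine ⟨⟨hgF, fun hgTmem => ?_⟩, hgne⟩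
      exact hfF ((hgn2 hgTmem) ▸ hgF)
    · rintro ⟨⟨hgF, hgT⟩, hgne⟩
      exact ⟨hgF, fun h => h.elim hgne (fun h2 => hgT h2.1)⟩
  have hlt : (F \ T'').ncard < (F \ T).ncard := by
    rw [hdiff]
    exact Set.ncard_diff_singleton_lt_of_mem ⟨heF, heT⟩ (Set.toFinite _)
  exact absurd (hmin T'' hT''mst) (by omega)
end

section
/- Let M be a matroid with weight w : E → ℝ, let w_min = min_{e∈E} w(e), E_min = {e : w(e) = w_min}, and let B_min be a basis of the restriction M | E_min. Then B_min is contained in some minimum-weight basis of M. -/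
open Matroid

variable {α : Type*}

lemma wt_eq_finset_sum [Fintype α] (w : α → ℝ) (S : Set α) :
    wt w S = ∑ e ∈ S.toFinite.toFinset, w e := by
  rw [wt, ← finsum_mem_coe_finset, Set.Finite.coe_toFinset]

lemma wt_split [Fintype α] (w : α → ℝ) (B C : Set α) :
    wt w B = wt w (B ∩ C) + wt w (B \ C) := by
  rw [wt, wt, wt, ← finsum_mem_union (Set.disjoint_of_subset_left
      Set.inter_subset_right Set.disjoint_sdiff_right) (Set.toFinite _) (Set.toFinite _),
    Set.inter_union_diff]

/-- If `wmin` is the minimum weight on the ground set,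
`Emin = {e ∈ E : w e = wmin}`, and `Bmin` is a basis of the restriction `M ↾ Emin`,
then `Bmin` is contained in some minimum-weight basis of `M`. -/
theorem stmt13 [Fintype α] (M : Matroid α) (w : α → ℝ) (hE : M.E.Nonempty)
    (wmin : ℝ) (hwmin : IsLeast (w '' M.E) wmin)
    (Bmin : Set α) (hBmin : (M ↾ {e ∈ M.E | w e = wmin}).IsBase Bmin) :
    ∃ B : Set α, MinWeightBase M w B ∧ Bmin ⊆ B := by
  -- a minimum-weight basis exists
  have hfin : {B : Set α | M.IsBase B}.Finite := Set.toFinite _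
  obtain ⟨B0, hB0, hB0min⟩ := Set.exists_min_image {B : Set α | M.IsBase B} (wt w)
    hfin M.exists_isBase
  -- Bmin is independent in M and contained in Emin
  have hBi : M.Indep Bmin ∧ Bmin ⊆ {e ∈ M.E | w e = wmin} := by
    have := hBmin.indep
    rwa [restrict_indep_iff] at this
  obtain ⟨B', hB', hsub, hsub'⟩ := hBi.1.exists_isBase_subset_union_isBase hB0
  refine ⟨B', ⟨hB', fun B'' hB'' => ?_⟩, hsub⟩
  -- suffices to show wt w B' ≤ wt w B0
  have key : wt w B' ≤ wt w B0 := by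
    rw [wt_split w B' B0, wt_split w B0 B', Set.inter_comm B0 B']
    gcongr
    rw [wt_eq_finset_sum, wt_eq_finset_sum]
    -- every element of B' \ B0 is in Bmin, hence has weight wmin
    have h1 : ∀ e ∈ (B' \ B0).toFinite.toFinset, w e = wmin := by
      intro e he
      rw [Set.Finite.mem_toFinset] at he
      have : e ∈ Bmin := by
        rcases hsub' he.1 with h | h
        · exact h
        · exact absurd h he.2
      exact (hBi.2 this).2
    have h2 : ∀ e ∈ (B0 \ B').toFinite.toFinset, wmin ≤ w e := by
      intro e he
      rw [Set.Finite.mem_toFinset] at he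
      exact hwmin.2 ⟨e, hB0.subset_ground he.1, rfl⟩
    have hcard : (B' \ B0).toFinite.toFinset.card = (B0 \ B').toFinite.toFinset.card := by
      have := hB'.ncard_diff_comm hB0
      rwa [Set.ncard_eq_toFinset_card _ (Set.toFinite _), Set.ncard_eq_toFinset_card _ (Set.toFinite _)] at this
    calc ∑ e ∈ (B' \ B0).toFinite.toFinset, w e = (B' \ B0).toFinite.toFinset.card • wmin := by
          rw [Finset.sum_congr rfl h1, Finset.sum_const]
      _ = (B0 \ B').toFinite.toFinset.card • wmin := by rw [hcard]
      _ ≤ ∑ e ∈ (B0 \ B').toFinite.toFinset, w e := Finset.card_nsmul_le_sum _ _ _ h2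
  exact key.trans (hB0min B'' hB'')
end

section
/- Let B and B' be two distinct bases of a matroid M that both have minimum weight with respect to w, let e ∈ B' \ B, and let C be the unique circuit contained in B ∪ {e}. Then every element e' ∈ C satisfies w(e') = w(e) or w(e') < w(e); moreover C contains no element of weight strictly greater than w(e). -/
open Matroid

variable {α : Type*}

lemma wt_insert_s15 [Fintype α] (w : α → ℝ) {a : α} {s : Set α} (h : a ∉ s) :
    wt w (insert a s) = w a + wt w s := by
  exact finsum_mem_insert w h (Set.toFinite s)

/-- If `B ≠ B'` are minimum-weight bases, `e ∈ B' \ B`, and `C` is the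
unique circuit contained in `B ∪ {e}`, then every `e' ∈ C` has weight equal to or less
than `w e`; moreover `C` contains no element of weight strictly greater than `w e`. -/
theorem stmt15 [Fintype α] (M : Matroid α) (w : α → ℝ) (B B' : Set α)
    (hB : MinWeightBase M w B) (hB' : MinWeightBase M w B') (hne : B ≠ B')
    (e : α) (he : e ∈ B' \ B) (C : Set α) (hC : _root_.IsCircuit M C) (hCsub : C ⊆ B ∪ {e}) :
    (∀ e' ∈ C, w e' = w e ∨ w e' < w e) ∧ ∀ e' ∈ C, ¬ w e < w e' := by
  obtain ⟨hBb, hBmin⟩ := hB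
  have key : ∀ e' ∈ C, w e' ≤ w e := by
    intro e' he'C
    rcases eq_or_ne e' e with rfl | hee
    · exact le_refl _
    -- e' ∈ B
    have he'B : e' ∈ B := by
      rcases hCsub he'C with h | h
      · exact h
      · exact absurd h hee
    have heB : e ∉ B := he.2
    -- D := C \ {e'} is independent and e' ∈ closure D
    have hDind : M.Indep (C \ {e'}) :=
      hC.2.2 _ (Set.sdiff_singleton_ssubset.mpr he'C)
    have he'E : e' ∈ M.E := hC.1 he'C
    have he'cl : e' ∈ M.closure (C \ {e'}) := by
      rw [hDind.mem_closure_iff]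
      left
      rw [Set.insert_diff_singleton, Set.insert_eq_of_mem he'C]
      exact ⟨hC.2.1, hC.1⟩
    -- B'' := insert e (B \ {e'})
    set B'' : Set α := insert e (B \ {e'}) with hB''def
    have hB''E : B'' ⊆ M.E := by
      rw [hB''def]
      exact Set.insert_subset (hB'.1.subset_ground he.1) ((Set.diff_subset).trans hBb.subset_ground)
    -- C \ {e'} ⊆ B''
    have hDsub : C \ {e'} ⊆ B'' := by
      intro x hx
      rcases hCsub hx.1 with h | h
      · exact Set.mem_insert_of_mem _ ⟨h, hx.2⟩
      · exact h ▸ Set.mem_insert _ _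
    -- B'' is spanning
    have he'cl' : e' ∈ M.closure B'' := M.closure_subset_closure hDsub he'cl
    have hBsub : B ⊆ M.closure B'' := by
      intro x hxB
      rcases eq_or_ne x e' with rfl | hx
      · exact he'cl'
      · exact M.subset_closure B'' hB''E (Set.mem_insert_of_mem _ ⟨hxB, hx⟩)
    have hspan : M.Spanning B'' := by
      rw [spanning_iff_closure_eq hB''E]
      refine subset_antisymm (M.closure_subset_ground _) ?_
      calc M.E = M.closure B := hBb.closure_eq.symm
        _ ⊆ M.closure B'' := M.closure_subset_closure_of_subset_closure hBsub
    -- B'' contains a base B₀; B'' has the same encard as B, so B'' = B₀ is a base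
    obtain ⟨B₀, hB₀, hB₀sub⟩ := (spanning_iff_exists_isBase_subset hB''E).mp hspan
    have heD : e ∉ B \ {e'} := fun h => heB h.1
    have hcard : B''.encard = B.encard := by
      rw [hB''def, Set.encard_insert_of_notMem heD, Set.encard_diff_singleton_add_one he'B]
    have hB''b : M.IsBase B'' := by
      have : B₀ = B'' := (Set.toFinite B₀).eq_of_subset_of_encard_le hB₀sub
        (by rw [hcard, hB₀.encard_eq_encard_of_isBase hBb])
      exact this ▸ hB₀
    -- weight comparison
    have hwB'' : wt w B'' = w e + (wt w B - w e') := by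
      rw [hB''def, wt_insert_s15 w heD]
      congr 1
      have : wt w B = w e' + wt w (B \ {e'}) := by
        conv_lhs => rw [← Set.insert_diff_singleton.trans (Set.insert_eq_of_mem he'B)]
        exact wt_insert_s15 w (fun h => h.2 rfl)
      linarith
    have hle := hBmin B'' hB''b
    rw [hwB''] at hle
    linarith
  refine ⟨fun e' h => ?_, fun e' h hlt => absurd hlt (not_lt.mpr (key e' h))⟩
  rcases lt_or_eq_of_le (key e' h) with h' | h'
  · exact Or.inr h'
  · exact Or.inl h'
end

section
/- Let M be a matroid on ground set E with weight w, and let B be the basis produced by the greedy procedure that, iteratively on the (current contracted) matroid, adds a basis of the restriction to the minimum-weight remaining elements and contracts them. Then B is a minimum-weight basis of M. -/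
open Matroid

variable {α : Type*}

/-- The contraction `M / X`, defined by duality from restriction. -/
noncomputable def ctr (M : Matroid α) (X : Set α) : Matroid α := (M✶ ↾ (M.E \ X))✶

/-- The outputs of the greedy procedure: while the ground set is nonempty, pick a basis of
the restriction to the minimum-weight elements, add it, and contract those elements. -/
inductive GreedyOut (w : α → ℝ) : Matroid α → Set α → Prop
  | empty (M : Matroid α) (h : M.E = ∅) : GreedyOut w M ∅
  | step (M : Matroid α) (wmin : ℝ) (hmin : IsLeast (w '' M.E) wmin)
      (Bmin B' : Set α) (hBmin : (M ↾ {e ∈ M.E | w e = wmin}).IsBase Bmin)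
      (hrec : GreedyOut w (ctr M {e ∈ M.E | w e = wmin}) B') :
      GreedyOut w M (Bmin ∪ B')

section Aux

open Set

lemma ctr_ground (M : Matroid α) (X : Set α) : (ctr M X).E = M.E \ X := rfl

lemma wt_union (w : α → ℝ) {A B : Set α} (hA : A.Finite) (hB : B.Finite)
    (h : Disjoint A B) : wt w (A ∪ B) = wt w A + wt w B :=
  finsum_mem_union h hA hB

lemma wt_eq_sum (w : α → ℝ) {S : Set α} (hS : S.Finite) :
    wt w S = ∑ e ∈ hS.toFinset, w e := by
  rw [wt, ← finsum_mem_coe_finset, Set.Finite.coe_toFinset]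

/-- If `B3` is a base of the contracted matroid... reversed: a base of `M` that intersects `X`
in a basis of `X` yields a base of `ctr M X` after deleting `X`. -/
lemma ctr_base_of_base {M : Matroid α} {X B3 : Set α} (hB3 : M.IsBase B3)
    (hX : X ⊆ M.E) (hbX : M.IsBasis (B3 ∩ X) X) : (ctr M X).IsBase (B3 \ X) := by
  rw [ctr, dual_isBase_iff' ]
  have hXE : M.E \ X ⊆ M✶.E := by rw [dual_ground]; exact diff_subset
  constructor
  · have hset : (M✶ ↾ (M.E \ X)).E \ (B3 \ X) = (M.E \ B3) ∩ (M.E \ X) := by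
      rw [restrict_ground_eq]
      ext e
      simp only [mem_diff, mem_inter_iff]
      tauto
    rw [hset, isBase_restrict_iff (M := M✶) hXE]
    exact hB3.compl_inter_isBasis_of_inter_isBasis hbX
  · rw [restrict_ground_eq]
    exact diff_subset_diff_left hB3.subset_ground

/-- A basis of `X` together with a base of `ctr M X` forms a base of `M`. -/
lemma base_of_ctr_base [Fintype α] {M : Matroid α} {X BX B' : Set α} (hX : X ⊆ M.E)
    (hBX : M.IsBasis BX X) (hB' : (ctr M X).IsBase B') : M.IsBase (BX ∪ B') := by
  have hB'E : B' ⊆ M.E \ X := hB'.subset_ground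
  rw [ctr, dual_isBase_iff'] at hB'
  obtain ⟨hB'base, -⟩ := hB'
  rw [restrict_ground_eq] at hB'base
  have hXE : M.E \ X ⊆ M✶.E := by rw [dual_ground]; exact diff_subset
  rw [isBase_restrict_iff (M := M✶) hXE] at hB'base
  -- hB'base : M✶.IsBasis ((M.E \ X) \ B') (M.E \ X)
  obtain ⟨D, hD, hDeq⟩ := hB'base.exists_isBase
  -- hD : M✶.IsBase D, hDeq : (M.E \ X) \ B' = D ∩ (M.E \ X)
  set B0 : Set α := M.E \ D with hB0def
  have hB0 : M.IsBase B0 := hD.compl_isBase_of_dual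
  have hbasisX : M.IsBasis (B0 ∩ X) X := by
    have h1 : M✶.IsBasis (D ∩ (M.E \ X)) (M.E \ X) := hDeq ▸ hB'base
    have h2 := hD.compl_inter_isBasis_of_inter_isBasis h1
    simpa [dual_ground, diff_diff_cancel_left hX] using h2
  have hDX : D ⊆ M.E := hD.subset_ground
  have hB0mX : B0 ∩ (M.E \ X) = B' := by
    have h1 : (M.E \ X) \ ((M.E \ X) \ B') = (M.E \ X) \ (D ∩ (M.E \ X)) := by
      rw [hDeq]
    rw [diff_diff_cancel_left hB'E, diff_inter_self_eq_diff] at h1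
    rw [h1, hB0def]
    ext e
    simp only [mem_diff, mem_inter_iff]
    tauto
  have hB0eq : B0 = (B0 ∩ X) ∪ B' := by
    rw [← hB0mX]
    ext e
    simp only [mem_union, mem_inter_iff, mem_diff]
    constructor
    · intro he
      rcases em (e ∈ X) with h | h
      · exact Or.inl ⟨he, h⟩
      · exact Or.inr ⟨he, hB0.subset_ground he, h⟩
    · rintro (⟨he, -⟩ | ⟨he, -⟩) <;> exact he
  -- spanning
  have hBXE : BX ⊆ M.E := hBX.subset.trans hX
  have hB'ME : B' ⊆ M.E := hB'E.trans diff_subset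
  have hsub : BX ∪ B' ⊆ M.E := union_subset hBXE hB'ME
  have hspan : M.Spanning (BX ∪ B') := by
    rw [spanning_iff_closure_eq hsub]
    have e1 : M.closure (BX ∪ B') = M.closure (X ∪ B') := by
      rw [← closure_union_closure_left_eq, hBX.closure_eq_closure,
        closure_union_closure_left_eq]
    have e2 : M.closure ((B0 ∩ X) ∪ B') = M.closure (X ∪ B') := by
      rw [← closure_union_closure_left_eq, hbasisX.closure_eq_closure,
        closure_union_closure_left_eq]
    rw [e1, ← e2, ← hB0eq, hB0.closure_eq]
  obtain ⟨B1, hB1, hB1sub⟩ := hspan.exists_isBase_subset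
  -- cardinalities
  have hdisj : Disjoint BX B' := by
    refine disjoint_left.mpr fun e he he' => ?_
    exact (hB'E he').2 (hBX.subset he)
  have hdisj0 : Disjoint (B0 ∩ X) B' := by
    refine disjoint_left.mpr fun e he he' => ?_
    exact (hB'E he').2 he.2
  have hcard : (BX ∪ B').encard = B0.encard := by
    rw [encard_union_eq hdisj, hB0eq, encard_union_eq hdisj0,
      hBX.encard_eq_encard hbasisX]
  have : B1 = BX ∪ B' := by
    refine (Set.toFinite B1).eq_of_subset_of_encard_le hB1sub ?_
    rw [hcard, hB0.encard_eq_encard_of_isBase hB1]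
  rwa [← this]

lemma wt_le_of_bases [Fintype α] {M : Matroid α} {w : α → ℝ} {B1 B2 : Set α} {c : ℝ}
    (h1 : M.IsBase B1) (h2 : M.IsBase B2)
    (hlo : ∀ e ∈ B1 \ B2, w e = c) (hhi : ∀ e ∈ B2 \ B1, c ≤ w e) :
    wt w B1 ≤ wt w B2 := by
  have e1 : wt w B1 = wt w (B1 ∩ B2) + wt w (B1 \ B2) := by
    rw [← wt_union w (Set.toFinite _) (Set.toFinite _)
      (disjoint_left.mpr fun a ha hb => hb.2 ha.2), Set.inter_union_diff]
  have e2 : wt w B2 = wt w (B1 ∩ B2) + wt w (B2 \ B1) := by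
    rw [← wt_union w (Set.toFinite _) (Set.toFinite _)
      (disjoint_left.mpr fun a ha hb => hb.2 ha.1), Set.inter_comm,
      Set.inter_union_diff]
  rw [e1, e2]
  have hcard : (B1 \ B2).ncard = (B2 \ B1).ncard := h1.ncard_diff_comm h2
  have hf1 : (B1 \ B2).Finite := Set.toFinite _
  have hf2 : (B2 \ B1).Finite := Set.toFinite _
  have hc1 : wt w (B1 \ B2) = (B1 \ B2).ncard * c := by
    rw [wt_eq_sum w hf1,
      Finset.sum_congr rfl (fun x hx => hlo x (hf1.mem_toFinset.mp hx)),
      Finset.sum_const, Set.ncard_eq_toFinset_card _ hf1, nsmul_eq_mul]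
  have hc2 : (B2 \ B1).ncard * c ≤ wt w (B2 \ B1) := by
    rw [wt_eq_sum w hf2, Set.ncard_eq_toFinset_card _ hf2]
    have := Finset.card_nsmul_le_sum hf2.toFinset w c
      (fun x hx => hhi x (hf2.mem_toFinset.mp hx))
    simpa [nsmul_eq_mul] using this
  have : wt w (B1 \ B2) ≤ wt w (B2 \ B1) := by
    rw [hc1]
    calc ((B1 \ B2).ncard : ℝ) * c = (B2 \ B1).ncard * c := by rw [hcard]
    _ ≤ wt w (B2 \ B1) := hc2
  linarith

end Aux

/-- Any basis produced by the greedy procedure is a minimum-weight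
basis of `M`. -/
theorem stmt17 [Fintype α] (M : Matroid α) (w : α → ℝ) (B : Set α)
    (hB : GreedyOut w M B) : MinWeightBase M w B := by
  induction hB with
  | empty M h =>
    obtain ⟨B0, hB0⟩ := M.exists_isBase
    have hB0e : B0 = ∅ := Set.subset_eq_empty (hB0.subset_ground.trans h.subset) rfl
    constructor
    · rwa [hB0e] at hB0
    · intro B'' hB''
      have : B'' = ∅ := Set.subset_eq_empty (hB''.subset_ground.trans h.subset) rfl
      rw [this]
  | step M wmin hmin Bmin B' hBmin hrec IH =>
    set X : Set α := {e ∈ M.E | w e = wmin} with hXdef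
    have hX : X ⊆ M.E := Set.sep_subset _ _
    have hBmin' : M.IsBasis Bmin X := (isBase_restrict_iff hX).mp hBmin
    have hBbase : M.IsBase (Bmin ∪ B') := base_of_ctr_base hX hBmin' IH.1
    refine ⟨hBbase, fun B'' hB'' => ?_⟩
    obtain ⟨B3, hB3, hsub, hsub2⟩ := hBmin'.indep.exists_isBase_subset_union_isBase hB''
    have hBeq : Bmin = B3 ∩ X :=
      hBmin'.eq_of_subset_indep (hB3.indep.inter_right X)
        (Set.subset_inter hsub hBmin'.subset) Set.inter_subset_right
    have hctr : (ctr M X).IsBase (B3 \ X) :=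
      ctr_base_of_base hB3 hX (hBeq ▸ hBmin')
    have hwB' : wt w B' ≤ wt w (B3 \ X) := IH.2 _ hctr
    have hB'E : B' ⊆ M.E \ X := IH.1.subset_ground
    have hdisj : Disjoint Bmin B' :=
      Set.disjoint_left.mpr fun e he he' => (hB'E he').2 (hBmin'.subset he)
    have hsplit : wt w (Bmin ∪ B') = wt w Bmin + wt w B' :=
      wt_union w (Set.toFinite _) (Set.toFinite _) hdisj
    have hsplit3 : wt w B3 = wt w Bmin + wt w (B3 \ X) := by
      rw [hBeq, ← wt_union w (Set.toFinite _) (Set.toFinite _)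
        (Set.disjoint_left.mpr fun a ha hb => hb.2 ha.2), Set.inter_union_diff]
    have h3le : wt w B3 ≤ wt w B'' := by
      refine wt_le_of_bases (c := wmin) hB3 hB'' (fun e he => ?_) (fun e he => ?_)
      · have heBmin : e ∈ Bmin := by
          rcases hsub2 he.1 with h | h
          · exact h
          · exact absurd h he.2
        exact (hBmin'.subset heBmin).2
      · exact hmin.2 ⟨e, hB''.subset_ground he.1, rfl⟩
    calc wt w (Bmin ∪ B') = wt w Bmin + wt w B' := hsplit
      _ ≤ wt w Bmin + wt w (B3 \ X) := by linarith
      _ = wt w B3 := hsplit3.symm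
      _ ≤ wt w B'' := h3le
end
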